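/- If H is a graph with o(H) = 𝒩 and G is a graph with n(G) ≥ 2, then ⌊n(G)/2⌋·γ(H) + ⌈n(G)/2⌉·γ_MB(H) ≤ γ_MB'(G⊙H) ≤ n(G)·γ_MB(H). -/

import Mathlib

/-!
Formalization of the Maker-Breaker domination game (MBD game).

In the MBD game on a graph `G`, Dominator and Staller alternately select
previously unplayed vertices.  Dominator wins when the set of vertices he has
selected is a dominating set of `G`; Staller wins when she has selected a
vertex of every dominating set of `G`, which happens exactly when the closed
neighbourhood of some vertex is entirely contained in her set of selected
vertices.
-/

/-- `D` is a dominating set of `G` (as a finset of vertices). -/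
def IsDomSet {V : Type*} (G : SimpleGraph V) (D : Finset V) : Prop :=
  ∀ v, v ∈ D ∨ ∃ u ∈ D, G.Adj u v

/-- Staller (whose selected vertices form `S`) has won: she owns the whole
closed neighbourhood of some vertex, hence a vertex of every dominating set. -/
def StallerWon {V : Type*} (G : SimpleGraph V) (S : Finset V) : Prop :=
  ∃ v, v ∈ S ∧ ∀ u, G.Adj v u → u ∈ S

section Game

variable {V : Type*} [DecidableEq V]

mutual
  /-- Position with Dominator's vertices `D`, Staller's vertices `S` and
  Dominator to move: Dominator can guarantee to complete a dominating set
  using at most `k` further moves of his own. -/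
  inductive DomWinD (G : SimpleGraph V) : Finset V → Finset V → ℕ → Prop where
    | done (D S : Finset V) (k : ℕ) : IsDomSet G D → DomWinD G D S k
    | step (D S : Finset V) (k : ℕ) (v : V) : v ∉ D → v ∉ S →
        DomWinS G (insert v D) S k → DomWinD G D S (k + 1)

  /-- Position with Dominator's vertices `D`, Staller's vertices `S` and
  Staller to move: Dominator can guarantee to complete a dominating set
  using at most `k` further moves of his own. -/
  inductive DomWinS (G : SimpleGraph V) : Finset V → Finset V → ℕ → Prop where
    | done (D S : Finset V) (k : ℕ) : IsDomSet G D → DomWinS G D S k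
    | step (D S : Finset V) (k : ℕ) : (∃ w, w ∉ D ∧ w ∉ S) →
        (∀ w, w ∉ D → w ∉ S → DomWinD G D (insert w S) k) → DomWinS G D S k
end

mutual
  /-- Position with Dominator's vertices `D`, Staller's vertices `S` and
  Staller to move: Staller can guarantee to claim a whole closed neighbourhood
  using at most `k` further moves of her own. -/
  inductive StalWinS (G : SimpleGraph V) : Finset V → Finset V → ℕ → Prop where
    | done (D S : Finset V) (k : ℕ) : StallerWon G S → StalWinS G D S k
    | step (D S : Finset V) (k : ℕ) (w : V) : w ∉ D → w ∉ S →
        StalWinD G D (insert w S) k → StalWinS G D S (k + 1)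

  /-- Position with Dominator's vertices `D`, Staller's vertices `S` and
  Dominator to move: Staller can guarantee to claim a whole closed
  neighbourhood using at most `k` further moves of her own. -/
  inductive StalWinD (G : SimpleGraph V) : Finset V → Finset V → ℕ → Prop where
    | done (D S : Finset V) (k : ℕ) : StallerWon G S → StalWinD G D S k
    | step (D S : Finset V) (k : ℕ) : (∃ v, v ∉ D ∧ v ∉ S) →
        (∀ v, v ∉ D → v ∉ S → StalWinS G (insert v D) S k) → StalWinD G D S k
end

/-- `γ_MB(G)`: minimum number of Dominator's moves with which he can guarantee
to win the D-game (Dominator moves first); `⊤` if he cannot win it. -/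
noncomputable def gammaMB (G : SimpleGraph V) : ℕ∞ :=
  sInf {k : ℕ∞ | ∃ n : ℕ, k = n ∧ DomWinD G ∅ ∅ n}

/-- `γ_MB'(G)`: minimum number of Dominator's moves with which he can guarantee
to win the S-game (Staller moves first); `⊤` if he cannot win it. -/
noncomputable def gammaMB' (G : SimpleGraph V) : ℕ∞ :=
  sInf {k : ℕ∞ | ∃ n : ℕ, k = n ∧ DomWinS G ∅ ∅ n}

/-- `γ_SMB(G)`: minimum number of Staller's moves with which she can guarantee
to win the D-game (Dominator moves first); `⊤` if she cannot win it. -/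
noncomputable def gammaSMB (G : SimpleGraph V) : ℕ∞ :=
  sInf {k : ℕ∞ | ∃ n : ℕ, k = n ∧ StalWinD G ∅ ∅ n}

/-- `γ_SMB'(G)`: minimum number of Staller's moves with which she can guarantee
to win the S-game (Staller moves first); `⊤` if she cannot win it. -/
noncomputable def gammaSMB' (G : SimpleGraph V) : ℕ∞ :=
  sInf {k : ℕ∞ | ∃ n : ℕ, k = n ∧ StalWinS G ∅ ∅ n}

/-- Outcome `𝒟`: Dominator has a winning strategy no matter who starts. -/
def OutcomeD (G : SimpleGraph V) : Prop :=
  (∃ n, DomWinD G ∅ ∅ n) ∧ (∃ n, DomWinS G ∅ ∅ n)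

/-- Outcome `𝒮`: Staller has a winning strategy no matter who starts. -/
def OutcomeS (G : SimpleGraph V) : Prop :=
  (∃ n, StalWinD G ∅ ∅ n) ∧ (∃ n, StalWinS G ∅ ∅ n)

/-- Outcome `𝒩`: the first player has a winning strategy. -/
def OutcomeN (G : SimpleGraph V) : Prop :=
  (∃ n, DomWinD G ∅ ∅ n) ∧ (∃ n, StalWinS G ∅ ∅ n)

end Game

/-- The corona product `G ⊙ H`: one copy of `G`, a copy of `H` for every
vertex of `G`, and the `i`-th vertex of `G` joined to every vertex of the
`i`-th copy of `H`. -/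
def coronaProd {α β : Type*} (G : SimpleGraph α) (H : SimpleGraph β) :
    SimpleGraph (α ⊕ α × β) where
  Adj x y :=
    match x, y with
    | Sum.inl a, Sum.inl a' => G.Adj a a'
    | Sum.inl a, Sum.inr p => a = p.1
    | Sum.inr p, Sum.inl a => a = p.1
    | Sum.inr p, Sum.inr q => p.1 = q.1 ∧ H.Adj p.2 q.2
  symm := ⟨by
    rintro (a | p) (a' | q) h
    · exact G.adj_symm h
    · exact h
    · exact h
    · exact ⟨h.1.symm, H.adj_symm h.2⟩⟩
  loopless := ⟨by
    rintro (a | p) h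
    · exact G.irrefl h
    · exact H.irrefl h.2⟩

/-- The domination number `γ(G)` of a finite graph. -/
noncomputable def domNumber {V : Type*} [Fintype V] (G : SimpleGraph V) : ℕ :=
  sInf {n : ℕ | ∃ D : Finset V, D.card = n ∧ IsDomSet G D}

/-- `v` is a dominating vertex: it is adjacent to all other vertices. -/
def IsDomVertex {V : Type*} (G : SimpleGraph V) (v : V) : Prop :=
  ∀ u, u ≠ v → G.Adj v u

/-- `v` is an isolated vertex (degree `0`). -/
def IsIsolatedVertex {V : Type*} (G : SimpleGraph V) (v : V) : Prop :=
  ∀ u, ¬ G.Adj v u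

/-- `v` is a leaf (degree `1`). -/
def IsLeaf {V : Type*} (G : SimpleGraph V) (v : V) : Prop :=
  ∃! u, G.Adj v u

/-- `v` is a strong support vertex: adjacent to at least two leaves. -/
def IsStrongSupport {V : Type*} (G : SimpleGraph V) (v : V) : Prop :=
  ∃ u w, u ≠ w ∧ G.Adj v u ∧ G.Adj v w ∧ IsLeaf G u ∧ IsLeaf G w

set_option linter.unusedSectionVars false
set_option maxHeartbeats 1000000

section Basics
variable {V : Type*} [DecidableEq V] {G : SimpleGraph V}

lemma isDomSet_mono {D D' : Finset V} (h : IsDomSet G D) (hsub : D ⊆ D') : IsDomSet G D' := by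
  intro v; rcases h v with hv | ⟨u, hu, hadj⟩
  · exact Or.inl (hsub hv)
  · exact Or.inr ⟨u, hsub hu, hadj⟩

/-- Shrinking Staller's set preserves Dominator's win (both node types). -/
lemma domWin_shrink :
    (∀ {D S B}, DomWinD G D S B → ∀ S', S' ⊆ S → DomWinD G D S' B) ∧
    (∀ {D S B}, DomWinS G D S B → ∀ S', S' ⊆ S → DomWinS G D S' B) := by
  constructor
  · intro D S B h
    refine DomWinD.rec (G := G)
      (motive_1 := fun D S B _ => ∀ S', S' ⊆ S → DomWinD G D S' B)
      (motive_2 := fun D S B _ => ∀ S', S' ⊆ S → DomWinS G D S' B)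
      ?_ ?_ ?_ ?_ h
    · intro D S k hd S' _; exact DomWinD.done _ _ _ hd
    · intro D S k v hvD hvS _ ih S' hsub
      exact DomWinD.step _ _ _ v hvD (fun hv => hvS (hsub hv)) (ih S' hsub)
    · intro D S k hd S' _; exact DomWinS.done _ _ _ hd
    · intro D S k hex hall ih S' hsub
      obtain ⟨w0, hw0D, hw0S⟩ := hex
      refine DomWinS.step _ _ _ ⟨w0, hw0D, fun h => hw0S (hsub h)⟩ ?_
      intro w hwD hwS
      by_cases hws : w ∈ S
      · exact ih w0 hw0D hw0S (insert w S') (by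
          intro x hx; rcases Finset.mem_insert.mp hx with rfl | hx
          · exact Finset.mem_insert_of_mem hws
          · exact Finset.mem_insert_of_mem (hsub hx))
      · exact ih w hwD hws (insert w S') (Finset.insert_subset_insert _ hsub)
  · intro D S B h
    refine DomWinS.rec (G := G)
      (motive_1 := fun D S B _ => ∀ S', S' ⊆ S → DomWinD G D S' B)
      (motive_2 := fun D S B _ => ∀ S', S' ⊆ S → DomWinS G D S' B)
      ?_ ?_ ?_ ?_ h
    · intro D S k hd S' _; exact DomWinD.done _ _ _ hd
    · intro D S k v hvD hvS _ ih S' hsub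
      exact DomWinD.step _ _ _ v hvD (fun hv => hvS (hsub hv)) (ih S' hsub)
    · intro D S k hd S' _; exact DomWinS.done _ _ _ hd
    · intro D S k hex hall ih S' hsub
      obtain ⟨w0, hw0D, hw0S⟩ := hex
      refine DomWinS.step _ _ _ ⟨w0, hw0D, fun h => hw0S (hsub h)⟩ ?_
      intro w hwD hwS
      by_cases hws : w ∈ S
      · exact ih w0 hw0D hw0S (insert w S') (by
          intro x hx; rcases Finset.mem_insert.mp hx with rfl | hx
          · exact Finset.mem_insert_of_mem hws
          · exact Finset.mem_insert_of_mem (hsub hx))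
      · exact ih w hwD hws (insert w S') (Finset.insert_subset_insert _ hsub)

lemma domWinD_shrinkS {D S B} (h : DomWinD G D S B) {S'} (hs : S' ⊆ S) : DomWinD G D S' B :=
  domWin_shrink.1 h S' hs

lemma domWinS_shrinkS {D S B} (h : DomWinS G D S B) {S'} (hs : S' ⊆ S) : DomWinS G D S' B :=
  domWin_shrink.2 h S' hs

/-- A Dominator win yields a dominating set of size at most `|D| + B`. -/
lemma domWin_card :
    (∀ {D S B}, DomWinD G D S B → ∃ D₀ : Finset V, IsDomSet G D₀ ∧ D₀.card ≤ D.card + B) ∧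
    (∀ {D S B}, DomWinS G D S B → ∃ D₀ : Finset V, IsDomSet G D₀ ∧ D₀.card ≤ D.card + B) := by
  constructor
  · intro D S B h
    refine DomWinD.rec (G := G)
      (motive_1 := fun D S B _ => ∃ D₀ : Finset V, IsDomSet G D₀ ∧ D₀.card ≤ D.card + B)
      (motive_2 := fun D S B _ => ∃ D₀ : Finset V, IsDomSet G D₀ ∧ D₀.card ≤ D.card + B)
      ?_ ?_ ?_ ?_ h
    · intro D S k hd; exact ⟨D, hd, by omega⟩
    · intro D S k v hvD hvS _ ih
      obtain ⟨D₀, h₀, hc⟩ := ih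
      exact ⟨D₀, h₀, by have := Finset.card_insert_of_notMem hvD; omega⟩
    · intro D S k hd; exact ⟨D, hd, by omega⟩
    · intro D S k hex hall ih
      obtain ⟨w0, hw0D, hw0S⟩ := hex
      exact ih w0 hw0D hw0S
  · intro D S B h
    refine DomWinS.rec (G := G)
      (motive_1 := fun D S B _ => ∃ D₀ : Finset V, IsDomSet G D₀ ∧ D₀.card ≤ D.card + B)
      (motive_2 := fun D S B _ => ∃ D₀ : Finset V, IsDomSet G D₀ ∧ D₀.card ≤ D.card + B)
      ?_ ?_ ?_ ?_ h
    · intro D S k hd; exact ⟨D, hd, by omega⟩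
    · intro D S k v hvD hvS _ ih
      obtain ⟨D₀, h₀, hc⟩ := ih
      exact ⟨D₀, h₀, by have := Finset.card_insert_of_notMem hvD; omega⟩
    · intro D S k hd; exact ⟨D, hd, by omega⟩
    · intro D S k hex hall ih
      obtain ⟨w0, hw0D, hw0S⟩ := hex
      exact ih w0 hw0D hw0S

/-- Staller "pass" lemma: if she has a free move, she can make one keeping
Dominator unable to win with budget `r`. -/
lemma staller_free_move {D S : Finset V} {r : ℕ}
    (hex : ∃ w, w ∉ D ∧ w ∉ S) (h : ¬ DomWinD G D S r) :
    ∃ w, w ∉ D ∧ w ∉ S ∧ ¬ DomWinD G D (insert w S) r := by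
  by_contra hc
  push_neg at hc
  obtain ⟨w0, hw0D, hw0S⟩ := hex
  have h0 : DomWinD G D (insert w0 S) r := hc w0 hw0D hw0S
  apply h
  cases h0 with
  | done _ _ _ hd => exact DomWinD.done _ _ _ hd
  | step _ _ k v hvD hvS hsub =>
      exact DomWinD.step _ _ _ v hvD (fun hv => hvS (Finset.mem_insert_of_mem hv))
        (domWinS_shrinkS hsub (Finset.subset_insert _ _))

/-- From a "her-turn" certificate, Staller either has a cert-preserving move,
or the copy is exhausted and undominated. -/
lemma staller_response {D S : Finset V} {r : ℕ} (h : ¬ DomWinS G D S r) :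
    ¬ IsDomSet G D ∧
    ((∃ w, w ∉ D ∧ w ∉ S ∧ ¬ DomWinD G D (insert w S) r) ∨ (∀ b, b ∈ D ∨ b ∈ S)) := by
  have hnd : ¬ IsDomSet G D := fun hd => h (DomWinS.done _ _ _ hd)
  refine ⟨hnd, ?_⟩
  by_cases hex : ∃ w, w ∉ D ∧ w ∉ S
  · left
    by_contra hc
    push_neg at hc
    exact h (DomWinS.step _ _ _ hex (fun w h1 h2 => hc w h1 h2))
  · right; intro b
    by_contra hb
    push_neg at hb
    exact hex ⟨b, hb.1, hb.2⟩

lemma not_domWinD_not_isDomSet {D S : Finset V} {r : ℕ} (h : ¬ DomWinD G D S r) :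
    ¬ IsDomSet G D := fun hd => h (DomWinD.done _ _ _ hd)

lemma not_domWinS_not_isDomSet {D S : Finset V} {r : ℕ} (h : ¬ DomWinS G D S r) :
    ¬ IsDomSet G D := fun hd => h (DomWinS.done _ _ _ hd)

/-- Dominator's "attack step" on a her-turn certificate copy. -/
lemma cert_attack {D S : Finset V} {r : ℕ} (h : ¬ DomWinD G D S (r + 1))
    {v : V} (hvD : v ∉ D) (hvS : v ∉ S) : ¬ DomWinS G (insert v D) S r :=
  fun hw => h (DomWinD.step _ _ _ v hvD hvS hw)

/-- StallerWon is monotone. -/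
lemma stallerWon_mono {S S' : Finset V} (h : StallerWon G S) (hs : S ⊆ S') : StallerWon G S' := by
  obtain ⟨v, hv, hnb⟩ := h
  exact ⟨v, hs hv, fun u hu => hs (hnb u hu)⟩

/-- Shrinking Dominator's set preserves Staller's win (both node types). -/
lemma stalWin_shrink :
    (∀ {D S B}, StalWinS G D S B → ∀ D', D' ⊆ D → StalWinS G D' S B) ∧
    (∀ {D S B}, StalWinD G D S B → ∀ D', D' ⊆ D → StalWinD G D' S B) := by
  constructor
  · intro D S B h
    refine StalWinS.rec (G := G)
      (motive_1 := fun D S B _ => ∀ D', D' ⊆ D → StalWinS G D' S B)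
      (motive_2 := fun D S B _ => ∀ D', D' ⊆ D → StalWinD G D' S B)
      ?_ ?_ ?_ ?_ h
    · intro D S k hd D' _; exact StalWinS.done _ _ _ hd
    · intro D S k w hwD hwS _ ih D' hsub
      exact StalWinS.step _ _ _ w (fun hw => hwD (hsub hw)) hwS (ih D' hsub)
    · intro D S k hd D' _; exact StalWinD.done _ _ _ hd
    · intro D S k hex hall ih D' hsub
      obtain ⟨v0, hv0D, hv0S⟩ := hex
      refine StalWinD.step _ _ _ ⟨v0, fun h => hv0D (hsub h), hv0S⟩ ?_
      intro v hvD hvS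
      by_cases hvd : v ∈ D
      · exact ih v0 hv0D hv0S (insert v D') (by
          intro x hx; rcases Finset.mem_insert.mp hx with rfl | hx
          · exact Finset.mem_insert_of_mem hvd
          · exact Finset.mem_insert_of_mem (hsub hx))
      · exact ih v hvd hvS (insert v D') (Finset.insert_subset_insert _ hsub)
  · intro D S B h
    refine StalWinD.rec (G := G)
      (motive_1 := fun D S B _ => ∀ D', D' ⊆ D → StalWinS G D' S B)
      (motive_2 := fun D S B _ => ∀ D', D' ⊆ D → StalWinD G D' S B)
      ?_ ?_ ?_ ?_ h
    · intro D S k hd D' _; exact StalWinS.done _ _ _ hd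
    · intro D S k w hwD hwS _ ih D' hsub
      exact StalWinS.step _ _ _ w (fun hw => hwD (hsub hw)) hwS (ih D' hsub)
    · intro D S k hd D' _; exact StalWinD.done _ _ _ hd
    · intro D S k hex hall ih D' hsub
      obtain ⟨v0, hv0D, hv0S⟩ := hex
      refine StalWinD.step _ _ _ ⟨v0, fun h => hv0D (hsub h), hv0S⟩ ?_
      intro v hvD hvS
      by_cases hvd : v ∈ D
      · exact ih v0 hv0D hv0S (insert v D') (by
          intro x hx; rcases Finset.mem_insert.mp hx with rfl | hx
          · exact Finset.mem_insert_of_mem hvd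
          · exact Finset.mem_insert_of_mem (hsub hx))
      · exact ih v hvd hvS (insert v D') (Finset.insert_subset_insert _ hsub)

/-- A Staller win certificate implies Dominator's set is not dominating
(given disjointness). -/
lemma stalWin_not_dom :
    (∀ {D S B}, StalWinS G D S B → (∀ x ∈ D, x ∉ S) → ¬ IsDomSet G D) ∧
    (∀ {D S B}, StalWinD G D S B → (∀ x ∈ D, x ∉ S) → ¬ IsDomSet G D) := by
  have won_case : ∀ (D S : Finset V), StallerWon G S → (∀ x ∈ D, x ∉ S) → ¬ IsDomSet G D := by
    intro D S hwon hdisj hdom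
    obtain ⟨v, hv, hnb⟩ := hwon
    rcases hdom v with hvD | ⟨u, huD, hadj⟩
    · exact hdisj v hvD hv
    · exact hdisj u huD (hnb u (G.adj_symm hadj))
  constructor
  · intro D S B h
    refine StalWinS.rec (G := G)
      (motive_1 := fun D S B _ => (∀ x ∈ D, x ∉ S) → ¬ IsDomSet G D)
      (motive_2 := fun D S B _ => (∀ x ∈ D, x ∉ S) → ¬ IsDomSet G D)
      ?_ ?_ ?_ ?_ h
    · intro D S k hd; exact won_case D S hd
    · intro D S k w hwD hwS _ ih hdisj
      exact ih (fun x hx => by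
        intro hmem
        rcases Finset.mem_insert.mp hmem with rfl | hmem
        · exact hwD hx
        · exact hdisj x hx hmem)
    · intro D S k hd; exact won_case D S hd
    · intro D S k hex hall ih hdisj hdom
      obtain ⟨v0, hv0D, hv0S⟩ := hex
      refine ih v0 hv0D hv0S ?_ (isDomSet_mono hdom (Finset.subset_insert _ _))
      intro x hx
      rcases Finset.mem_insert.mp hx with rfl | hx
      · exact hv0S
      · exact hdisj x hx
  · intro D S B h
    refine StalWinD.rec (G := G)
      (motive_1 := fun D S B _ => (∀ x ∈ D, x ∉ S) → ¬ IsDomSet G D)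
      (motive_2 := fun D S B _ => (∀ x ∈ D, x ∉ S) → ¬ IsDomSet G D)
      ?_ ?_ ?_ ?_ h
    · intro D S k hd; exact won_case D S hd
    · intro D S k w hwD hwS _ ih hdisj
      exact ih (fun x hx => by
        intro hmem
        rcases Finset.mem_insert.mp hmem with rfl | hmem
        · exact hwD hx
        · exact hdisj x hx hmem)
    · intro D S k hd; exact won_case D S hd
    · intro D S k hex hall ih hdisj hdom
      obtain ⟨v0, hv0D, hv0S⟩ := hex
      refine ih v0 hv0D hv0S ?_ (isDomSet_mono hdom (Finset.subset_insert _ _))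
      intro x hx
      rcases Finset.mem_insert.mp hx with rfl | hx
      · exact hv0S
      · exact hdisj x hx

end Basics
section Corona

variable {α β : Type*} [Fintype α] [DecidableEq α] [Fintype β] [DecidableEq β]
variable {G : SimpleGraph α} {H : SimpleGraph β}

/-- The trace of a set of corona vertices in copy `a`. -/
def cproj (a : α) (D : Finset (α ⊕ α × β)) : Finset β :=
  Finset.univ.filter (fun b => Sum.inr (a, b) ∈ D)

lemma mem_cproj {a : α} {D : Finset (α ⊕ α × β)} {b : β} :
    b ∈ cproj a D ↔ Sum.inr (a, b) ∈ D := by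
  simp [cproj]

lemma cproj_empty (a : α) : cproj a (∅ : Finset (α ⊕ α × β)) = ∅ := by
  ext b; simp [mem_cproj]

lemma cproj_insert_inl (a a' : α) (D : Finset (α ⊕ α × β)) :
    cproj a (insert (Sum.inl a') D) = cproj a D := by
  ext b; simp [mem_cproj]

lemma cproj_insert_same (a : α) (u : β) (D : Finset (α ⊕ α × β)) :
    cproj a (insert (Sum.inr (a, u)) D) = insert u (cproj a D) := by
  ext b; simp [mem_cproj]

lemma cproj_insert_ne {a a' : α} (h : a' ≠ a) (u : β) (D : Finset (α ⊕ α × β)) :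
    cproj a (insert (Sum.inr (a', u)) D) = cproj a D := by
  ext b; simp only [mem_cproj, Finset.mem_insert, Sum.inr.injEq, Prod.mk.injEq]
  constructor
  · rintro (⟨h1, h2⟩ | hb)
    · exact absurd h1.symm h
    · exact hb
  · exact fun hb => Or.inr hb

lemma corona_adj_inl_inr {a : α} {p : α × β} :
    (coronaProd G H).Adj (Sum.inl a) (Sum.inr p) ↔ a = p.1 := Iff.rfl

lemma corona_adj_inr_inl {a : α} {p : α × β} :
    (coronaProd G H).Adj (Sum.inr p) (Sum.inl a) ↔ a = p.1 := Iff.rfl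

lemma corona_adj_inr_inr {p q : α × β} :
    (coronaProd G H).Adj (Sum.inr p) (Sum.inr q) ↔ p.1 = q.1 ∧ H.Adj p.2 q.2 := Iff.rfl

/-- Extract local domination from corona domination when Dominator does not
own the `G`-vertex of the copy. -/
lemma isDomSet_cproj {D : Finset (α ⊕ α × β)} (hdom : IsDomSet (coronaProd G H) D)
    {a : α} (ha : Sum.inl a ∉ D) : IsDomSet H (cproj a D) := by
  intro b
  rcases hdom (Sum.inr (a, b)) with hb | ⟨u, huD, hadj⟩
  · exact Or.inl (mem_cproj.mpr hb)
  · match u with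
    | Sum.inl a' =>
        have : a' = a := hadj
        subst this; exact absurd huD ha
    | Sum.inr (a', b') =>
        obtain ⟨h1, h2⟩ := (corona_adj_inr_inr).mp hadj
        dsimp at h1
        subst h1
        exact Or.inr ⟨b', mem_cproj.mpr huD, h2⟩

/-- If Staller owns the `G`-vertex of copy `a` and the local trace of `D`
is not dominating, then `D` is not dominating in the corona. -/
lemma not_isDomSet_corona {D : Finset (α ⊕ α × β)} {a : α}
    (ha : Sum.inl a ∉ D) (h : ¬ IsDomSet H (cproj a D)) :
    ¬ IsDomSet (coronaProd G H) D := fun hdom => h (isDomSet_cproj hdom ha)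

/-- An untouched copy (with `β` nonempty) witnesses non-domination. -/
lemma fresh_not_dom {D : Finset (α ⊕ α × β)} {a : α} (hb : Nonempty β)
    (ha : Sum.inl a ∉ D) (hDa : cproj a D = ∅) :
    ¬ IsDomSet (coronaProd G H) D := by
  apply not_isDomSet_corona ha
  rw [hDa]
  intro hdom
  obtain ⟨b0⟩ := hb
  rcases hdom b0 with h | ⟨u, hu, _⟩
  · exact absurd h (Finset.notMem_empty _)
  · exact absurd hu (Finset.notMem_empty _)

/-- Punishment: if Staller owns the `G`-vertex of a copy and holds a local
StalWin certificate there, Dominator cannot have a winning strategy.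
Version for Staller-to-move nodes. -/
lemma punishS {D S : Finset (α ⊕ α × β)} {B : ℕ}
    (h : DomWinS (coronaProd G H) D S B) :
    ∀ a σ, Sum.inl a ∈ S → (∀ x ∈ D, x ∉ S) →
      StalWinS H (cproj a D) (cproj a S) σ → False := by
  refine DomWinS.rec (G := coronaProd G H)
    (motive_1 := fun D S B _ => ∀ a σ, Sum.inl a ∈ S → (∀ x ∈ D, x ∉ S) →
      StalWinD H (cproj a D) (cproj a S) σ → False)
    (motive_2 := fun D S B _ => ∀ a σ, Sum.inl a ∈ S → (∀ x ∈ D, x ∉ S) →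
      StalWinS H (cproj a D) (cproj a S) σ → False)
    ?_ ?_ ?_ ?_ h
  -- DomWinD.done
  · intro D S k hdom a σ haS hdisj cert
    have haD : Sum.inl a ∉ D := fun h => hdisj _ h haS
    have hdisj' : ∀ x ∈ cproj a D, x ∉ cproj a S := fun x hx hx' =>
      hdisj _ (mem_cproj.mp hx) (mem_cproj.mp hx')
    exact stalWin_not_dom.2 cert hdisj' (isDomSet_cproj hdom haD)
  -- DomWinD.step : Dominator moves v
  · intro D S k v hvD hvS hsub ih a σ haS hdisj cert
    have hdisj' : ∀ x ∈ insert v D, x ∉ S := by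
      intro x hx
      rcases Finset.mem_insert.mp hx with rfl | hx
      · exact hvS
      · exact hdisj x hx
    match v, hvD, hvS with
    | Sum.inl a', hvD, hvS =>
        -- not in copy a's interior: cproj a D unchanged; convert cert D→S
        have hpa : cproj a (insert (Sum.inl a') D) = cproj a D := cproj_insert_inl _ _ _
        cases cert with
        | done _ _ _ hwon =>
            exact ih a σ haS hdisj' (by rw [hpa]; exact StalWinS.done _ _ _ hwon)
        | step _ _ _ hex hall =>
            obtain ⟨v0, hv0D, hv0S⟩ := hex
            have := stalWin_shrink.1 (hall v0 hv0D hv0S) (cproj a D)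
              (Finset.subset_insert _ _)
            exact ih a σ haS hdisj' (by rw [hpa]; exact this)
    | Sum.inr (a', u), hvD, hvS =>
        by_cases haa : a' = a
        · subst haa
          have hu : u ∉ cproj a' D := fun h => hvD (mem_cproj.mp h)
          have hu' : u ∉ cproj a' S := fun h => hvS (mem_cproj.mp h)
          cases cert with
          | done _ _ _ hwon =>
              refine ih a' σ haS hdisj' ?_
              rw [cproj_insert_same]
              exact StalWinS.done _ _ _ hwon
          | step _ _ _ hex hall =>
              refine ih a' σ haS hdisj' ?_
              rw [cproj_insert_same]
              exact hall u hu hu'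
        · have hpa : cproj a (insert (Sum.inr (a', u)) D) = cproj a D :=
            cproj_insert_ne haa _ _
          cases cert with
          | done _ _ _ hwon =>
              exact ih a σ haS hdisj' (by rw [hpa]; exact StalWinS.done _ _ _ hwon)
          | step _ _ _ hex hall =>
              obtain ⟨v0, hv0D, hv0S⟩ := hex
              have := stalWin_shrink.1 (hall v0 hv0D hv0S) (cproj a D)
                (Finset.subset_insert _ _)
              exact ih a σ haS hdisj' (by rw [hpa]; exact this)
  -- DomWinS.done
  · intro D S k hdom a σ haS hdisj cert
    have haD : Sum.inl a ∉ D := fun h => hdisj _ h haS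
    have hdisj' : ∀ x ∈ cproj a D, x ∉ cproj a S := fun x hx hx' =>
      hdisj _ (mem_cproj.mp hx) (mem_cproj.mp hx')
    exact stalWin_not_dom.1 cert hdisj' (isDomSet_cproj hdom haD)
  -- DomWinS.step : Staller to move; she follows her certificate
  · intro D S k hex hall ih a σ haS hdisj cert
    cases cert with
    | done _ _ _ hwon =>
        -- she has already won locally; make an arbitrary move
        obtain ⟨w0, hw0D, hw0S⟩ := hex
        refine ih w0 hw0D hw0S a σ (Finset.mem_insert_of_mem haS) ?_ ?_
        · intro x hx hx'
          rcases Finset.mem_insert.mp hx' with rfl | hx'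
          · exact hw0D hx
          · exact hdisj x hx hx'
        · refine StalWinD.done _ _ _ (stallerWon_mono hwon ?_)
          intro x hx
          rcases mem_cproj.mp hx with h
          exact mem_cproj.mpr (Finset.mem_insert_of_mem (mem_cproj.mp hx))
    | step _ _ σ' w hwD hwS hsub =>
        have hwD' : Sum.inr (a, w) ∉ D := fun h => hwD (mem_cproj.mpr h)
        have hwS' : Sum.inr (a, w) ∉ S := fun h => hwS (mem_cproj.mpr h)
        refine ih (Sum.inr (a, w)) hwD' hwS' a σ' (Finset.mem_insert_of_mem haS) ?_ ?_
        · intro x hx hx'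
          rcases Finset.mem_insert.mp hx' with rfl | hx'
          · exact hwD' hx
          · exact hdisj x hx hx'
        · rw [cproj_insert_same]
          exact hsub

/-- Dead copy: Staller owns the `G`-vertex, the copy is exhausted, and
Dominator's trace there is not dominating.  Then Dominator cannot win. -/
lemma deadS {D S : Finset (α ⊕ α × β)} {B : ℕ}
    (h : DomWinS (coronaProd G H) D S B) :
    ∀ a, Sum.inl a ∈ S → Sum.inl a ∉ D → ¬ IsDomSet H (cproj a D) →
      (∀ b, b ∈ cproj a D ∨ b ∈ cproj a S) → False := by
  refine DomWinS.rec (G := coronaProd G H)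
    (motive_1 := fun D S B _ => ∀ a, Sum.inl a ∈ S → Sum.inl a ∉ D →
      ¬ IsDomSet H (cproj a D) → (∀ b, b ∈ cproj a D ∨ b ∈ cproj a S) → False)
    (motive_2 := fun D S B _ => ∀ a, Sum.inl a ∈ S → Sum.inl a ∉ D →
      ¬ IsDomSet H (cproj a D) → (∀ b, b ∈ cproj a D ∨ b ∈ cproj a S) → False)
    ?_ ?_ ?_ ?_ h
  · intro D S k hdom a haS haD hnd hfull
    exact not_isDomSet_corona haD hnd hdom
  · intro D S k v hvD hvS hsub ih a haS haD hnd hfull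
    match v, hvD, hvS with
    | Sum.inl a', hvD, hvS =>
        have hne : Sum.inl a ∉ insert (Sum.inl a') D := by
          intro h
          rcases Finset.mem_insert.mp h with h | h
          · rw [← h] at hvS; exact hvS haS
          · exact haD h
        refine ih a haS hne ?_ ?_
        · rw [cproj_insert_inl]; exact hnd
        · intro b; rw [cproj_insert_inl]; exact hfull b
    | Sum.inr (a', u), hvD, hvS =>
        by_cases haa : a' = a
        · subst haa
          rcases hfull u with hu | hu
          · exact hvD (mem_cproj.mp hu)
          · exact hvS (mem_cproj.mp hu)
        · have hne : Sum.inl a ∉ insert (Sum.inr (a', u)) D := by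
            intro h
            rcases Finset.mem_insert.mp h with h | h
            · exact absurd h (by simp)
            · exact haD h
          refine ih a haS hne ?_ ?_
          · rw [cproj_insert_ne haa]; exact hnd
          · intro b; rw [cproj_insert_ne haa]; exact hfull b
  · intro D S k hdom a haS haD hnd hfull
    exact not_isDomSet_corona haD hnd hdom
  · intro D S k hex hall ih a haS haD hnd hfull
    obtain ⟨w0, hw0D, hw0S⟩ := hex
    refine ih w0 hw0D hw0S a (Finset.mem_insert_of_mem haS) haD hnd ?_
    intro b
    rcases hfull b with h | h
    · exact Or.inl h
    · exact Or.inr (mem_cproj.mpr (Finset.mem_insert_of_mem (mem_cproj.mp h)))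

end Corona
section Upper

variable {α β : Type*} [Fintype α] [DecidableEq α] [Fintype β] [DecidableEq β]
variable {G : SimpleGraph α} {H : SimpleGraph β}

lemma cproj_insert_other {a : α} {x : α ⊕ α × β} (hx : ∀ u : β, x ≠ Sum.inr (a, u))
    (D : Finset (α ⊕ α × β)) : cproj a (insert x D) = cproj a D := by
  ext b
  simp only [mem_cproj, Finset.mem_insert]
  constructor
  · rintro (h | h)
    · exact absurd h.symm (hx b)
    · exact h
  · exact fun h => Or.inr h

lemma nonempty_beta_of_not_dom (hne : ¬ IsDomSet H (∅ : Finset β)) : Nonempty β := by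
  by_contra hc
  exact hne (fun v => absurd ⟨v⟩ hc)

lemma measure_drop {D S : Finset (α ⊕ α × β)} {x y : α ⊕ α × β}
    (hx : x ∉ D) (hx' : x ∉ S) :
    (Finset.univ \ (insert y D ∪ insert x S)).card < (Finset.univ \ (D ∪ S)).card := by
  apply Finset.card_lt_card
  constructor
  · intro v hv
    simp only [Finset.mem_sdiff, Finset.mem_union, Finset.mem_insert] at hv ⊢
    exact ⟨hv.1, fun h => hv.2 (by tauto)⟩
  · intro hsub
    have hxmem : x ∈ Finset.univ \ (D ∪ S) := by
      simp only [Finset.mem_sdiff, Finset.mem_union]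
      exact ⟨Finset.mem_univ _, fun h => by tauto⟩
    have h2 := hsub hxmem
    rw [Finset.mem_sdiff] at h2
    exact h2.2 (Finset.mem_union_right _ (Finset.mem_insert_self _ _))

/-- Invariant for the upper bound: each copy is finished (Dominator owns the
`G`-vertex), untouched, or active with a local Dominator-win certificate. -/
def UCase (k : ℕ) (D S : Finset (α ⊕ α × β)) (f : α → ℕ) (a : α) : Prop :=
  (Sum.inl a ∈ D) ∨
  (Sum.inl a ∉ D ∧ Sum.inl a ∉ S ∧ cproj a D = ∅ ∧ cproj a S = ∅ ∧ f a = k) ∨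
  (Sum.inl a ∈ S ∧ DomWinS H (cproj a D) (cproj a S) (f a))

lemma sum_update_le {f : α → ℕ} {B : ℕ} (a₀ : α) (v : ℕ)
    (hB : (∑ a, f a) ≤ B) (hv : v + 1 ≤ f a₀) :
    (∑ a, Function.update f a₀ v a) ≤ B - (f a₀ - v) ∧ f a₀ ≤ B := by
  have h1 : (∑ a, Function.update f a₀ v a)
      = v + ∑ a ∈ Finset.univ.erase a₀, f a := by
    rw [Finset.sum_update_of_mem (Finset.mem_univ a₀)]
    rw [Finset.sdiff_singleton_eq_erase]
  have h2 : f a₀ + ∑ a ∈ Finset.univ.erase a₀, f a = ∑ a, f a :=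
    Finset.add_sum_erase _ f (Finset.mem_univ a₀)
  omega

lemma fa_le_sum (f : α → ℕ) (a₀ : α) : f a₀ ≤ ∑ a, f a :=
  Finset.single_le_sum (fun _ _ => Nat.zero_le _) (Finset.mem_univ a₀)


lemma ucase_other {k : ℕ} {D S : Finset (α ⊕ α × β)} {f f' : α → ℕ} {a' : α}
    {x y : α ⊕ α × β} (H' : SimpleGraph β)
    (h : UCase (H := H') k D S f a')
    (hxne : ∀ u : β, x ≠ Sum.inr (a', u)) (hxne' : x ≠ Sum.inl a')
    (hyne : ∀ u : β, y ≠ Sum.inr (a', u)) (hyne' : y ≠ Sum.inl a')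
    (hf : f' a' = f a') :
    UCase (H := H') k (insert y D) (insert x S) f' a' := by
  rcases h with h1 | h2 | h3
  · exact Or.inl (Finset.mem_insert_of_mem h1)
  · refine Or.inr (Or.inl ⟨?_, ?_, ?_, ?_, ?_⟩)
    · intro hh
      rcases Finset.mem_insert.mp hh with hh | hh
      · exact hyne' hh.symm
      · exact h2.1 hh
    · intro hh
      rcases Finset.mem_insert.mp hh with hh | hh
      · exact hxne' hh.symm
      · exact h2.2.1 hh
    · rw [cproj_insert_other hyne]; exact h2.2.2.1
    · rw [cproj_insert_other hxne]; exact h2.2.2.2.1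
    · rw [hf]; exact h2.2.2.2.2
  · refine Or.inr (Or.inr ⟨Finset.mem_insert_of_mem h3.1, ?_⟩)
    rw [cproj_insert_other hyne, cproj_insert_other hxne, hf]
    exact h3.2

/-- Main upper-bound construction. -/
lemma upper_main (k : ℕ) (hk : DomWinD H ∅ ∅ k) (hne : ¬ IsDomSet H (∅ : Finset β)) :
    ∀ N (D S : Finset (α ⊕ α × β)) (f : α → ℕ) (B : ℕ),
      (Finset.univ \ (D ∪ S)).card ≤ N →
      (∀ x ∈ D, x ∉ S) →
      (∀ a, UCase (H := H) k D S f a) →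
      (∑ a, f a) ≤ B →
      DomWinS (coronaProd G H) D S B := by
  have hb : Nonempty β := nonempty_beta_of_not_dom hne
  have hk1 : 1 ≤ k := by
    cases hk with
    | done _ _ _ hd => exact absurd hd hne
    | step _ _ k' v _ _ _ => omega
  -- if every copy is finished or locally dominated, D dominates the corona
  have hdone : ∀ (D S : Finset (α ⊕ α × β)) (f : α → ℕ),
      (∀ a, UCase (H := H) k D S f a) →
      (∀ a, ¬ ((Sum.inl a ∉ D ∧ Sum.inl a ∉ S ∧ cproj a D = ∅ ∧ cproj a S = ∅ ∧ f a = k)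
        ∨ (Sum.inl a ∈ S ∧ DomWinS H (cproj a D) (cproj a S) (f a)
            ∧ ¬ IsDomSet H (cproj a D)))) →
      IsDomSet (coronaProd G H) D := by
    intro D S f hinv hno x
    have key : ∀ a : α, Sum.inl a ∈ D ∨ IsDomSet H (cproj a D) := by
      intro a
      rcases hinv a with h1 | h2 | h3
      · exact Or.inl h1
      · exact absurd (Or.inl h2) (hno a)
      · right
        by_contra hnd
        exact hno a (Or.inr ⟨h3.1, h3.2, hnd⟩)
    match x with
    | Sum.inl a =>
        rcases key a with h | h
        · exact Or.inl h
        · obtain ⟨b0⟩ := hb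
          have hu : ∃ u, u ∈ cproj a D := by
            rcases h b0 with hb | ⟨u, hu, _⟩
            · exact ⟨b0, hb⟩
            · exact ⟨u, hu⟩
          obtain ⟨u, hu⟩ := hu
          exact Or.inr ⟨Sum.inr (a, u), mem_cproj.mp hu, corona_adj_inr_inl.mpr rfl⟩
    | Sum.inr (a, b) =>
        rcases key a with h | h
        · exact Or.inr ⟨Sum.inl a, h, corona_adj_inl_inr.mpr rfl⟩
        · rcases h b with hb | ⟨u, hu, hadj⟩
          · exact Or.inl (mem_cproj.mp hb)
          · exact Or.inr ⟨Sum.inr (a, u), mem_cproj.mp hu, corona_adj_inr_inr.mpr ⟨rfl, hadj⟩⟩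
  intro N
  induction N with
  | zero =>
      intro D S f B hcard hdisj hinv hB
      by_cases hdom : IsDomSet (coronaProd G H) D
      · exact DomWinS.done _ _ _ hdom
      · exfalso
        have : ∃ a, (Sum.inl a ∉ D ∧ Sum.inl a ∉ S ∧ cproj a D = ∅ ∧ cproj a S = ∅ ∧ f a = k)
            ∨ (Sum.inl a ∈ S ∧ DomWinS H (cproj a D) (cproj a S) (f a)
                ∧ ¬ IsDomSet H (cproj a D)) := by
          by_contra hc
          exact hdom (hdone D S f hinv (fun a h => hc ⟨a, h⟩))
        obtain ⟨a, h⟩ := this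
        have hfree : ∃ x, x ∉ D ∧ x ∉ S := by
          rcases h with h | h
          · exact ⟨Sum.inl a, h.1, h.2.1⟩
          · rcases h.2.1 with hd | hstep
            · exact absurd ‹IsDomSet H (cproj a D)› h.2.2
            · next hex _ =>
              obtain ⟨w, hwD, hwS⟩ := hex
              exact ⟨Sum.inr (a, w), fun hh => hwD (mem_cproj.mpr hh),
                fun hh => hwS (mem_cproj.mpr hh)⟩
        obtain ⟨x, hxD, hxS⟩ := hfree
        have : x ∈ Finset.univ \ (D ∪ S) := by
          simp only [Finset.mem_sdiff, Finset.mem_union]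
          exact ⟨Finset.mem_univ _, fun hh => by tauto⟩
        have := Finset.card_pos.mpr ⟨x, this⟩
        omega
  | succ N ih =>
      intro D S f B hcard hdisj hinv hB
      by_cases hdom : IsDomSet (coronaProd G H) D
      · exact DomWinS.done _ _ _ hdom
      have hex0 : ∃ a, (Sum.inl a ∉ D ∧ Sum.inl a ∉ S ∧ cproj a D = ∅ ∧ cproj a S = ∅ ∧ f a = k)
          ∨ (Sum.inl a ∈ S ∧ DomWinS H (cproj a D) (cproj a S) (f a)
              ∧ ¬ IsDomSet H (cproj a D)) := by
        by_contra hc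
        exact hdom (hdone D S f hinv (fun a h => hc ⟨a, h⟩))
      obtain ⟨a₀, ha₀⟩ := hex0
      have hfree : ∃ x, x ∉ D ∧ x ∉ S := by
        rcases ha₀ with h | h
        · exact ⟨Sum.inl a₀, h.1, h.2.1⟩
        · rcases h.2.1 with hd | hstep
          · exact absurd ‹IsDomSet H (cproj a₀ D)› h.2.2
          · next hex _ =>
            obtain ⟨w, hwD, hwS⟩ := hex
            exact ⟨Sum.inr (a₀, w), fun hh => hwD (mem_cproj.mpr hh),
              fun hh => hwS (mem_cproj.mpr hh)⟩
      refine DomWinS.step _ _ _ hfree ?_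
      intro x hxD hxS
      -- "respond elsewhere" helper, used when copy of x needs no answer
      have elsewhere : ∀ (hcase : ∀ a, UCase (H := H) k (D) (insert x S) f a)
          (hxa₀D : (Sum.inl a₀ ∉ D ∧ Sum.inl a₀ ∉ insert x S ∧ cproj a₀ D = ∅
              ∧ cproj a₀ (insert x S) = ∅ ∧ f a₀ = k)
            ∨ (Sum.inl a₀ ∈ insert x S ∧
                DomWinS H (cproj a₀ D) (cproj a₀ (insert x S)) (f a₀)
                ∧ ¬ IsDomSet H (cproj a₀ D))),
          DomWinD (coronaProd G H) D (insert x S) B := by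
        intro hcase hxa₀
        rcases hxa₀ with hfr | hac
        · -- play the G-vertex of the untouched copy a₀
          obtain ⟨h1, h2, h3, h4, h5⟩ := hfr
          have hfa : f a₀ ≤ ∑ a, f a := fa_le_sum f a₀
          obtain ⟨B', rfl⟩ : ∃ B', B = B' + 1 := ⟨B - 1, by omega⟩
          refine DomWinD.step _ _ _ (Sum.inl a₀) h1 h2 ?_
          refine ih _ _ (Function.update f a₀ 0) B' ?_ ?_ ?_ ?_
          · have := measure_drop (D := D) (S := S) (y := Sum.inl a₀) hxD hxS
            omega
          · intro z hz
            rcases Finset.mem_insert.mp hz with rfl | hz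
            · exact h2
            · intro hzS
              rcases Finset.mem_insert.mp hzS with rfl | hzS
              · exact hxD hz
              · exact hdisj z hz hzS
          · intro a
            by_cases haa : a = a₀
            · subst haa
              exact Or.inl (Finset.mem_insert_self _ _)
            · rcases hcase a with hc1 | hc2 | hc3
              · exact Or.inl (Finset.mem_insert_of_mem hc1)
              · refine Or.inr (Or.inl ⟨?_, hc2.2.1, ?_, hc2.2.2.2.1, ?_⟩)
                · intro hh
                  rcases Finset.mem_insert.mp hh with hh | hh
                  · exact haa (Sum.inl.injEq _ _ ▸ (by injection hh))
                  · exact hc2.1 hh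
                · rw [cproj_insert_inl]; exact hc2.2.2.1
                · rw [Function.update_of_ne haa]; exact hc2.2.2.2.2
              · refine Or.inr (Or.inr ⟨hc3.1, ?_⟩)
                rw [cproj_insert_inl, Function.update_of_ne haa]
                exact hc3.2
          · have := (sum_update_le a₀ 0 hB (by omega)).1
            have h2' := (sum_update_le a₀ 0 hB (by omega)).2
            omega
        · -- advance the active but undominated copy a₀
          obtain ⟨h1, h2, hnd⟩ := hac
          rcases h2 with hdn | hstep
          · exact absurd ‹IsDomSet H (cproj a₀ D)› hnd
          next hex2 hall2 =>
            obtain ⟨w₀, hw₀D, hw₀S⟩ := hex2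
            have hd2 := hall2 w₀ hw₀D hw₀S
            obtain ⟨m, hm⟩ : ∃ m, f a₀ = m := ⟨_, rfl⟩
            rw [hm] at hd2
            rcases hd2 with hdn2 | hstep2
            · exact absurd ‹IsDomSet H (cproj a₀ D)› hnd
            next t v' hv'D hv'S hsub' =>
              have hfa : f a₀ ≤ ∑ a, f a := fa_le_sum f a₀
              have hfa1 : f a₀ = t + 1 := hm
              obtain ⟨B', rfl⟩ : ∃ B', B = B' + 1 := ⟨B - 1, by omega⟩
              have hyD : Sum.inr (a₀, v') ∉ D := fun hh => hv'D (mem_cproj.mpr hh)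
              have hyS : Sum.inr (a₀, v') ∉ insert x S := by
                intro hh
                have : v' ∈ cproj a₀ (insert x S) := mem_cproj.mpr hh
                exact hv'S (Finset.mem_insert_of_mem this)
              refine DomWinD.step _ _ _ (Sum.inr (a₀, v')) hyD hyS ?_
              refine ih _ _ (Function.update f a₀ t) B' ?_ ?_ ?_ ?_
              · have := measure_drop (D := D) (S := S) (y := Sum.inr (a₀, v')) hxD hxS
                omega
              · intro z hz
                rcases Finset.mem_insert.mp hz with rfl | hz
                · exact hyS
                · intro hzS
                  rcases Finset.mem_insert.mp hzS with rfl | hzS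
                  · exact hxD hz
                  · exact hdisj z hz hzS
              · intro a
                by_cases haa : a = a₀
                · subst haa
                  refine Or.inr (Or.inr ⟨h1, ?_⟩)
                  rw [cproj_insert_same, Function.update_self]
                  exact domWinS_shrinkS hsub' (Finset.subset_insert _ _)
                · rcases hcase a with hc1 | hc2 | hc3
                  · exact Or.inl (Finset.mem_insert_of_mem hc1)
                  · refine Or.inr (Or.inl ⟨?_, hc2.2.1, ?_, hc2.2.2.2.1, ?_⟩)
                    · intro hh
                      rcases Finset.mem_insert.mp hh with hh | hh
                      · exact (by simp at hh)
                      · exact hc2.1 hh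
                    · rw [cproj_insert_ne (fun hh => haa hh.symm) ]
                      exact hc2.2.2.1
                    · rw [Function.update_of_ne haa]; exact hc2.2.2.2.2
                  · refine Or.inr (Or.inr ⟨hc3.1, ?_⟩)
                    rw [cproj_insert_ne (fun hh => haa hh.symm), Function.update_of_ne haa]
                    exact hc3.2
              · have := (sum_update_le a₀ t hB (by omega)).1
                omega
      rcases x with a | ⟨a, w⟩
      · -- Staller grabs a G-vertex: the copy must be untouched
        rcases hinv a with h1 | h2 | h3
        · exact absurd h1 hxD
        swap
        · exact absurd h3.1 hxS
        obtain ⟨haD, haS, hDa, hSa, hfk⟩ := h2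
        cases hk with
        | done _ _ _ hd => exact absurd hd hne
        | step _ _ k₀ v₀ _ _ hsubk =>
          have hfa : f a ≤ ∑ a', f a' := fa_le_sum f a
          obtain ⟨B', rfl⟩ : ∃ B', B = B' + 1 := ⟨B - 1, by omega⟩
          have hyD : Sum.inr (a, v₀) ∉ D := fun hh => by
            have : v₀ ∈ cproj a D := mem_cproj.mpr hh
            rw [hDa] at this; exact absurd this (Finset.notMem_empty _)
          have hyS : Sum.inr (a, v₀) ∉ insert (Sum.inl a) S := by
            intro hh
            rcases Finset.mem_insert.mp hh with hh | hh
            · exact absurd hh (by simp)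
            · have : v₀ ∈ cproj a S := mem_cproj.mpr hh
              rw [hSa] at this; exact absurd this (Finset.notMem_empty _)
          refine DomWinD.step _ _ _ (Sum.inr (a, v₀)) hyD hyS ?_
          refine ih _ _ (Function.update f a k₀) B' ?_ ?_ ?_ ?_
          · have := measure_drop (D := D) (S := S) (y := Sum.inr (a, v₀)) hxD hxS
            omega
          · intro z hz
            rcases Finset.mem_insert.mp hz with rfl | hz
            · exact hyS
            · intro hzS
              rcases Finset.mem_insert.mp hzS with rfl | hzS
              · exact hxD hz
              · exact hdisj z hz hzS
          · intro a'
            by_cases haa : a' = a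
            · subst haa
              refine Or.inr (Or.inr ⟨Finset.mem_insert_self _ _, ?_⟩)
              rw [cproj_insert_same, cproj_insert_inl, Function.update_self, hDa, hSa]
              exact hsubk
            · refine ucase_other H (hinv a') ?_ ?_ ?_ ?_ (Function.update_of_ne haa _ _)
              · intro u hh; exact absurd hh (by simp)
              · intro hh
                exact haa (by injection hh with hh; exact hh.symm) |>.elim
              · intro u hh
                injection hh with hh
                exact haa (congrArg Prod.fst hh).symm
              · intro hh; exact absurd hh (by simp)
          · have := (sum_update_le a k₀ hB (by omega)).1
            omega
      · -- Staller plays inside copy a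
        rcases hinv a with h1 | h2 | h3
        · -- finished copy: respond elsewhere
          refine elsewhere ?_ ?_
          · intro a'
            by_cases haa : a' = a
            · subst haa; exact Or.inl h1
            · rcases hinv a' with hc1 | hc2 | hc3
              · exact Or.inl hc1
              · refine Or.inr (Or.inl ⟨hc2.1, ?_, hc2.2.2.1, ?_, hc2.2.2.2.2⟩)
                · intro hh
                  rcases Finset.mem_insert.mp hh with hh | hh
                  · exact absurd hh (by simp)
                  · exact hc2.2.1 hh
                · rw [cproj_insert_ne (fun hh => haa hh.symm)]
                  exact hc2.2.2.2.1
              · refine Or.inr (Or.inr ⟨Finset.mem_insert_of_mem hc3.1, ?_⟩)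
                rw [cproj_insert_ne (fun hh => haa hh.symm)]
                exact hc3.2
          · rcases ha₀ with hfr | hac
            · have haa : a₀ ≠ a := by
                intro hh; subst hh; exact hfr.1 h1
              refine Or.inl ⟨hfr.1, ?_, hfr.2.2.1, ?_, hfr.2.2.2.2⟩
              · intro hh
                rcases Finset.mem_insert.mp hh with hh | hh
                · exact absurd hh (by simp)
                · exact hfr.2.1 hh
              · rw [cproj_insert_ne (fun hh => haa hh.symm)]
                exact hfr.2.2.2.1
            · have haa : a₀ ≠ a := by
                intro hh; subst hh; exact hdisj _ h1 hac.1
              refine Or.inr ⟨Finset.mem_insert_of_mem hac.1, ?_, hac.2.2⟩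
              rw [cproj_insert_ne (fun hh => haa hh.symm)]
              exact hac.2.1
        · -- untouched copy: respond with its G-vertex
          obtain ⟨haD, haS, hDa, hSa, hfk⟩ := h2
          have hfa : f a ≤ ∑ a', f a' := fa_le_sum f a
          obtain ⟨B', rfl⟩ : ∃ B', B = B' + 1 := ⟨B - 1, by omega⟩
          have hyS : Sum.inl a ∉ insert (Sum.inr (a, w)) S := by
            intro hh
            rcases Finset.mem_insert.mp hh with hh | hh
            · exact absurd hh (by simp)
            · exact haS hh
          refine DomWinD.step _ _ _ (Sum.inl a) haD hyS ?_
          refine ih _ _ (Function.update f a 0) B' ?_ ?_ ?_ ?_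
          · have := measure_drop (D := D) (S := S) (y := Sum.inl a) hxD hxS
            omega
          · intro z hz
            rcases Finset.mem_insert.mp hz with rfl | hz
            · exact hyS
            · intro hzS
              rcases Finset.mem_insert.mp hzS with rfl | hzS
              · exact hxD hz
              · exact hdisj z hz hzS
          · intro a'
            by_cases haa : a' = a
            · subst haa; exact Or.inl (Finset.mem_insert_self _ _)
            · refine ucase_other H (hinv a') ?_ ?_ ?_ ?_ (Function.update_of_ne haa _ _)
              · intro u hh
                injection hh with hh
                exact haa (congrArg Prod.fst hh).symm
              · intro hh; exact absurd hh (by simp)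
              · intro u hh; exact absurd hh (by simp)
              · intro hh
                exact haa (by injection hh with hh; exact hh.symm) |>.elim
          · have := (sum_update_le a 0 hB (by omega)).1
            omega
        · -- active copy
          obtain ⟨haS, hcert⟩ := h3
          have hwD : w ∉ cproj a D := fun hh => hxD (mem_cproj.mp hh)
          have hwS : w ∉ cproj a S := fun hh => hxS (mem_cproj.mp hh)
          have hd : DomWinD H (cproj a D) (insert w (cproj a S)) (f a) := by
            cases hcert with
            | done _ _ _ hd' => exact DomWinD.done _ _ _ hd'
            | step _ _ _ hex2 hall2 => exact hall2 w hwD hwS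
          obtain ⟨m, hm⟩ : ∃ m, f a = m := ⟨_, rfl⟩
          rw [hm] at hd
          cases hd with
          | done _ _ _ hdn2 =>
            -- locally dominated already: respond elsewhere
            refine elsewhere ?_ ?_
            · intro a'
              by_cases haa : a' = a
              · subst haa
                refine Or.inr (Or.inr ⟨Finset.mem_insert_of_mem haS, ?_⟩)
                exact DomWinS.done _ _ _ hdn2
              · rcases hinv a' with hc1 | hc2 | hc3
                · exact Or.inl hc1
                · refine Or.inr (Or.inl ⟨hc2.1, ?_, hc2.2.2.1, ?_, hc2.2.2.2.2⟩)
                  · intro hh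
                    rcases Finset.mem_insert.mp hh with hh | hh
                    · exact absurd hh (by simp)
                    · exact hc2.2.1 hh
                  · rw [cproj_insert_ne (fun hh => haa hh.symm)]
                    exact hc2.2.2.2.1
                · refine Or.inr (Or.inr ⟨Finset.mem_insert_of_mem hc3.1, ?_⟩)
                  rw [cproj_insert_ne (fun hh => haa hh.symm)]
                  exact hc3.2
            · rcases ha₀ with hfr | hac
              · have haa : a₀ ≠ a := by
                  intro hh; subst hh; exact hfr.2.1 haS
                refine Or.inl ⟨hfr.1, ?_, hfr.2.2.1, ?_, hfr.2.2.2.2⟩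
                · intro hh
                  rcases Finset.mem_insert.mp hh with hh | hh
                  · exact absurd hh (by simp)
                  · exact hfr.2.1 hh
                · rw [cproj_insert_ne (fun hh => haa hh.symm)]
                  exact hfr.2.2.2.1
              · have haa : a₀ ≠ a := by
                  intro hh
                  exact hac.2.2 (by rw [hh]; exact hdn2)
                refine Or.inr ⟨Finset.mem_insert_of_mem hac.1, ?_, hac.2.2⟩
                rw [cproj_insert_ne (fun hh => haa hh.symm)]
                exact hac.2.1
          | step _ _ t v hvD hvS hsub =>
              have hfa : f a ≤ ∑ a', f a' := fa_le_sum f a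
              obtain ⟨B', rfl⟩ : ∃ B', B = B' + 1 := ⟨B - 1, by omega⟩
              have hyD : Sum.inr (a, v) ∉ D := fun hh => hvD (mem_cproj.mpr hh)
              have hyS : Sum.inr (a, v) ∉ insert (Sum.inr (a, w)) S := by
                intro hh
                rcases Finset.mem_insert.mp hh with hh | hh
                · injection hh with hh
                  have : v = w := (congrArg Prod.snd hh)
                  subst this
                  exact hvS (Finset.mem_insert_self _ _)
                · exact hvS (Finset.mem_insert_of_mem (mem_cproj.mpr hh))
              refine DomWinD.step _ _ _ (Sum.inr (a, v)) hyD hyS ?_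
              refine ih _ _ (Function.update f a t) B' ?_ ?_ ?_ ?_
              · have := measure_drop (D := D) (S := S) (y := Sum.inr (a, v)) hxD hxS
                omega
              · intro z hz
                rcases Finset.mem_insert.mp hz with rfl | hz
                · exact hyS
                · intro hzS
                  rcases Finset.mem_insert.mp hzS with rfl | hzS
                  · exact hxD hz
                  · exact hdisj z hz hzS
              · intro a'
                by_cases haa : a' = a
                · subst haa
                  refine Or.inr (Or.inr ⟨Finset.mem_insert_of_mem haS, ?_⟩)
                  rw [cproj_insert_same, cproj_insert_same, Function.update_self]
                  exact hsub
                · refine ucase_other H (hinv a') ?_ ?_ ?_ ?_ (Function.update_of_ne haa _ _)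
                  · intro u hh
                    injection hh with hh
                    exact haa (congrArg Prod.fst hh).symm
                  · intro hh; exact absurd hh (by simp)
                  · intro u hh
                    injection hh with hh
                    exact haa (congrArg Prod.fst hh).symm
                  · intro hh; exact absurd hh (by simp)
              · have := (sum_update_le a t hB (by omega)).1
                omega

end Upper
section Lower

variable {α β : Type*} [Fintype α] [DecidableEq α] [Fintype β] [DecidableEq β]
variable {G : SimpleGraph α} {H : SimpleGraph β}

/-- State of a copy in Staller's lower-bound strategy.
0 = pending, 1 = unarmored certificate (her-turn cert), 2 = armored (his-turn
cert), 3 = attacked (her-turn cert, to be re-armored), 4 = retired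
(Dominator has spent `k` moves there), 5 = given up (counts `γ(H)` only),
6 = limbo (she just grabbed the `G`-vertex; Dominator must answer locally). -/
def stOK (H : SimpleGraph β) (k : ℕ) (c : ℕ) (a : α) (D S : Finset (α ⊕ α × β)) : Prop :=
  match c with
  | 0 => Sum.inl a ∉ D ∧ Sum.inl a ∉ S ∧ cproj a D = ∅ ∧ cproj a S = ∅
  | 1 => Sum.inl a ∈ S ∧ (cproj a D).card < k ∧
      ¬ DomWinS H (cproj a D) (cproj a S) (k - 1 - (cproj a D).card)
  | 2 => Sum.inl a ∈ S ∧ (cproj a D).card < k ∧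
      ¬ DomWinD H (cproj a D) (cproj a S) (k - 1 - (cproj a D).card)
  | 3 => Sum.inl a ∈ S ∧ (cproj a D).card < k ∧
      ¬ DomWinS H (cproj a D) (cproj a S) (k - 1 - (cproj a D).card)
  | 4 => Sum.inl a ∈ S ∧ k ≤ (cproj a D).card
  | 5 => Sum.inl a ∈ S
  | 6 => Sum.inl a ∈ S ∧ cproj a D = ∅ ∧ cproj a S = ∅
  | _ => False

/-- Weight of a state for the counting invariant. -/
def stw : ℕ → ℕ
  | 0 => 1
  | 1 => 1
  | 2 => 2
  | 3 => 2
  | 4 => 2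
  | 5 => 0
  | 6 => 1
  | _ => 0

lemma stOK_insertD_other {k c : ℕ} {a : α} {D S : Finset (α ⊕ α × β)}
    (h : stOK H k c a D S) {y : α ⊕ α × β}
    (hy : ∀ u : β, y ≠ Sum.inr (a, u)) (hy' : y ≠ Sum.inl a) :
    stOK H k c a (insert y D) S := by
  have hp : cproj a (insert y D) = cproj a D := cproj_insert_other hy D
  match c, h with
  | 0, ⟨h1, h2, h3, h4⟩ =>
      refine ⟨?_, h2, by rw [hp]; exact h3, h4⟩
      intro hh
      rcases Finset.mem_insert.mp hh with hh | hh
      · exact hy' hh.symm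
      · exact h1 hh
  | 1, ⟨h1, h2, h3⟩ => exact ⟨h1, by rw [hp]; exact h2, by rw [hp]; exact h3⟩
  | 2, ⟨h1, h2, h3⟩ => exact ⟨h1, by rw [hp]; exact h2, by rw [hp]; exact h3⟩
  | 3, ⟨h1, h2, h3⟩ => exact ⟨h1, by rw [hp]; exact h2, by rw [hp]; exact h3⟩
  | 4, ⟨h1, h2⟩ => exact ⟨h1, by rw [hp]; exact h2⟩
  | 5, h1 => exact h1
  | 6, ⟨h1, h2, h3⟩ => exact ⟨h1, by rw [hp]; exact h2, h3⟩

lemma stOK_insertS_other {k c : ℕ} {a : α} {D S : Finset (α ⊕ α × β)}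
    (h : stOK H k c a D S) {x : α ⊕ α × β}
    (hx : ∀ u : β, x ≠ Sum.inr (a, u)) (hx' : x ≠ Sum.inl a) :
    stOK H k c a D (insert x S) := by
  have hp : cproj a (insert x S) = cproj a S := cproj_insert_other hx S
  match c, h with
  | 0, ⟨h1, h2, h3, h4⟩ =>
      refine ⟨h1, ?_, h3, by rw [hp]; exact h4⟩
      intro hh
      rcases Finset.mem_insert.mp hh with hh | hh
      · exact hx' hh.symm
      · exact h2 hh
  | 1, ⟨h1, h2, h3⟩ =>
      exact ⟨Finset.mem_insert_of_mem h1, h2, by rw [hp]; exact h3⟩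
  | 2, ⟨h1, h2, h3⟩ =>
      exact ⟨Finset.mem_insert_of_mem h1, h2, by rw [hp]; exact h3⟩
  | 3, ⟨h1, h2, h3⟩ =>
      exact ⟨Finset.mem_insert_of_mem h1, h2, by rw [hp]; exact h3⟩
  | 4, ⟨h1, h2⟩ => exact ⟨Finset.mem_insert_of_mem h1, h2⟩
  | 5, h1 => exact Finset.mem_insert_of_mem h1
  | 6, ⟨h1, h2, h3⟩ =>
      exact ⟨Finset.mem_insert_of_mem h1, h2, by rw [hp]; exact h3⟩

lemma sum_comp_update (F : ℕ → ℕ) (st : α → ℕ) (a₀ : α) (c : ℕ) :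
    (∑ a, F (Function.update st a₀ c a)) + F (st a₀) = (∑ a, F (st a)) + F c := by
  have h0 : ∀ a, F (Function.update st a₀ c a)
      = Function.update (fun a => F (st a)) a₀ (F c) a := by
    intro a
    by_cases haa : a = a₀
    · subst haa; rw [Function.update_self, Function.update_self]
    · rw [Function.update_of_ne haa, Function.update_of_ne haa]
  rw [Finset.sum_congr rfl (fun a _ => h0 a)]
  rw [Finset.sum_update_of_mem (Finset.mem_univ a₀), Finset.sdiff_singleton_eq_erase]
  have h2 := Finset.add_sum_erase Finset.univ (fun a => F (st a)) (Finset.mem_univ a₀)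
  omega

/-- Sum of copy-traces grows by one when Dominator plays inside a copy. -/
lemma sum_cproj_insert {D : Finset (α ⊕ α × β)} {b : α} {u : β}
    (hu : Sum.inr (b, u) ∉ D) :
    (∑ a, (cproj a (insert (Sum.inr (b, u)) D)).card) = (∑ a, (cproj a D).card) + 1 := by
  have h0 : ∀ a, (cproj a (insert (Sum.inr (b, u)) D)).card
      = (cproj a D).card + (if a = b then 1 else 0) := by
    intro a
    by_cases hab : a = b
    · subst hab
      rw [cproj_insert_same, Finset.card_insert_of_notMem (fun hh => hu (mem_cproj.mp hh))]
      simp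
    · rw [cproj_insert_ne (fun hh => hab hh.symm)]
      simp [hab]
  rw [Finset.sum_congr rfl (fun a _ => h0 a), Finset.sum_add_distrib]
  simp

/-- Sum of copy-traces is unchanged by a `G`-vertex insertion. -/
lemma sum_cproj_insert_inl {D : Finset (α ⊕ α × β)} {b : α} :
    (∑ a, (cproj a (insert (Sum.inl b) D)).card) = ∑ a, (cproj a D).card := by
  apply Finset.sum_congr rfl
  intro a _
  rw [cproj_insert_inl]

lemma one_le_At {st : α → ℕ} {a₁ : α} (h : st a₁ = 3) :
    1 ≤ ∑ a, (if st a = 3 then 1 else 0) := by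
  have h2 := Finset.single_le_sum (f := fun a => if st a = 3 then 1 else 0)
    (fun _ _ => Nat.zero_le _) (Finset.mem_univ a₁)
  simp only [h, if_pos] at h2
  exact h2

lemma att_unique {st : α → ℕ} {a₁ a₂ : α} (hle : (∑ a, (if st a = 3 then 1 else 0)) ≤ 1)
    (h1 : st a₁ = 3) (h2 : st a₂ = 3) : a₁ = a₂ := by
  by_contra hne
  have hsplit := Finset.add_sum_erase Finset.univ (fun a => if st a = 3 then 1 else 0)
    (Finset.mem_univ a₁)
  have h2' := Finset.single_le_sum (f := fun a => if st a = 3 then 1 else 0)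
    (fun _ _ => Nat.zero_le _) (Finset.mem_erase.mpr ⟨Ne.symm hne, Finset.mem_univ a₂⟩)
  simp only [h1, h2, if_pos] at hsplit h2'
  omega

/-- The final counting: enough retired copies force the bound. -/
lemma tally (n g k r M : ℕ) (hgk : g ≤ k) (h2r : n ≤ 2 * r) (hrn : r ≤ n)
    (hM : r * k + (n - r) * g ≤ M) :
    n / 2 * g + (n + 1) / 2 * k ≤ M := by
  obtain ⟨t, ht⟩ : ∃ t, r = (n + 1) / 2 + t := ⟨r - (n + 1) / 2, by omega⟩
  have h1 : n / 2 = t + (n - r) := by omega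
  have e1 : n / 2 * g = t * g + (n - r) * g := by rw [h1, Nat.add_mul]
  have e2 : r * k = (n + 1) / 2 * k + t * k := by rw [ht, Nat.add_mul]
  have e3 : t * g ≤ t * k := Nat.mul_le_mul_left t hgk
  omega

end Lower
section Lower2

variable {α β : Type*} [Fintype α] [DecidableEq α] [Fintype β] [DecidableEq β]
variable {G : SimpleGraph α} {H : SimpleGraph β}

lemma stOK_big {k c : ℕ} {a : α} {D S : Finset (α ⊕ α × β)} (hc : 7 ≤ c)
    (h : stOK H k c a D S) : False := by
  obtain ⟨m, rfl⟩ : ∃ m, c = m + 7 := ⟨c - 7, by omega⟩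
  exact h

lemma stOK_inl_mem {k c : ℕ} {a : α} {D S : Finset (α ⊕ α × β)}
    (h : stOK H k c a D S) (h0 : c ≠ 0) : Sum.inl a ∈ S := by
  match c, h with
  | 0, h => exact absurd rfl h0
  | 1, h => exact h.1
  | 2, h => exact h.1
  | 3, h => exact h.1
  | 4, h => exact h.1
  | 5, h => exact h
  | 6, h => exact h.1
  | (m+7), h => exact h.elim

lemma At_zero {st : α → ℕ} (h : ∀ a, st a ≠ 3) :
    (∑ a, (if st a = 3 then 1 else 0)) = 0 :=
  Finset.sum_eq_zero (fun a _ => if_neg (h a))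

lemma done_states (k : ℕ) (hb : Nonempty β)
    {D S : Finset (α ⊕ α × β)} (hdom : IsDomSet (coronaProd G H) D)
    (st : α → ℕ) (hok : ∀ a, stOK H k (st a) a D S) (hdisj : ∀ x ∈ D, x ∉ S) :
    ∀ a, st a = 4 ∨ st a = 5 := by
  intro a
  obtain ⟨c, hc⟩ : ∃ c, st a = c := ⟨_, rfl⟩
  have h := hok a
  rw [hc] at h
  have hcc : c = 0 ∨ c = 1 ∨ c = 2 ∨ c = 3 ∨ c = 4 ∨ c = 5 ∨ c = 6 ∨ 7 ≤ c := by omega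
  rcases hcc with rfl|rfl|rfl|rfl|rfl|rfl|rfl|h7
  · exact absurd hdom (fresh_not_dom hb h.1 h.2.2.1)
  · exact absurd hdom
      (not_isDomSet_corona (fun hD => hdisj _ hD h.1) (not_domWinS_not_isDomSet h.2.2))
  · exact absurd hdom
      (not_isDomSet_corona (fun hD => hdisj _ hD h.1) (not_domWinD_not_isDomSet h.2.2))
  · exact absurd hdom
      (not_isDomSet_corona (fun hD => hdisj _ hD h.1) (not_domWinS_not_isDomSet h.2.2))
  · exact Or.inl hc
  · exact Or.inr hc
  · exact absurd hdom (fresh_not_dom hb (fun hD => hdisj _ hD h.1) h.2.1)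
  · exact (stOK_big h7 h).elim

lemma done_tally (k g : ℕ) (hgk : g ≤ k)
    (hgd : ∀ D₀ : Finset β, IsDomSet H D₀ → g ≤ D₀.card)
    {D S : Finset (α ⊕ α × β)} (hdom : IsDomSet (coronaProd G H) D)
    (st : α → ℕ) (hok : ∀ a, stOK H k (st a) a D S) (hdisj : ∀ x ∈ D, x ∉ S)
    (h45 : ∀ a, st a = 4 ∨ st a = 5)
    (hJ : Fintype.card α ≤ ∑ a, stw (st a)) :
    Fintype.card α / 2 * g + (Fintype.card α + 1) / 2 * k ≤ ∑ a, (cproj a D).card := by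
  set n := Fintype.card α with hn
  set r := (Finset.univ.filter (fun a => st a = 4)).card with hr
  have hpoint : ∀ a, (if st a = 4 then k else g) ≤ (cproj a D).card := by
    intro a
    have h := hok a
    rcases h45 a with h4 | h5
    · rw [h4] at h ⊢
      simpa using h.2
    · rw [h5] at h ⊢
      have : IsDomSet H (cproj a D) := isDomSet_cproj hdom (fun hD => hdisj _ hD h)
      simpa using hgd _ this
  have hsum : (∑ a, (if st a = 4 then k else g)) ≤ ∑ a, (cproj a D).card :=
    Finset.sum_le_sum (fun a _ => hpoint a)
  have hsplit : (∑ a, (if st a = 4 then k else g))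
      = r * k + (Finset.univ.filter (fun a => ¬ st a = 4)).card * g := by
    rw [Finset.sum_ite, Finset.sum_const, Finset.sum_const, smul_eq_mul, smul_eq_mul]
  have hcompl : r + (Finset.univ.filter (fun a => ¬ st a = 4)).card = n := by
    rw [hr, hn]
    rw [Finset.card_filter_add_card_filter_not]
    exact Finset.card_univ
  have hrn : r ≤ n := by omega
  have hJ2 : (∑ a, stw (st a)) = 2 * r := by
    have hpt : ∀ a, stw (st a) = if st a = 4 then 2 else 0 := by
      intro a
      rcases h45 a with h4 | h5
      · rw [h4]; rfl
      · rw [h5]; rfl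
    rw [Finset.sum_congr rfl (fun a _ => hpt a), Finset.sum_ite, Finset.sum_const,
      Finset.sum_const, smul_eq_mul, smul_eq_mul, ← hr]
    omega
  have hnr : (Finset.univ.filter (fun a => ¬ st a = 4)).card = n - r := by omega
  rw [hnr] at hsplit
  refine tally n g k r _ hgk (by omega) hrn (by omega)

end Lower2
section Lower3

variable {α β : Type*} [Fintype α] [DecidableEq α] [Fintype β] [DecidableEq β]
variable {G : SimpleGraph α} {H : SimpleGraph β}

/-- Invariant at Staller-to-move nodes in the lower-bound strategy. -/
def LInvS (H : SimpleGraph β) (k : ℕ) (st : α → ℕ) (D S : Finset (α ⊕ α × β)) : Prop :=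
  (∀ a, stOK H k (st a) a D S) ∧
  (∀ x ∈ D, x ∉ S) ∧
  (∀ a, st a ≠ 6) ∧
  (∑ a, (if st a = 3 then 1 else 0)) ≤ 1 ∧
  ((∃ a, st a = 0) → ∀ a, st a ≠ 2 ∧ st a ≠ 3) ∧
  (((∀ a, st a ≠ 0 ∧ st a ≠ 1) ∧ Fintype.card α ≤ ∑ a, stw (st a)) ∨
    (Fintype.card α + (∑ a, (if st a = 3 then 1 else 0)) ≤ ∑ a, stw (st a)))

/-- Invariant at Dominator-to-move nodes in the lower-bound strategy. -/
def LInvD (H : SimpleGraph β) (k : ℕ) (st : α → ℕ) (D S : Finset (α ⊕ α × β)) : Prop :=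
  (∀ a, stOK H k (st a) a D S) ∧
  (∀ x ∈ D, x ∉ S) ∧
  (∀ a, st a ≠ 3) ∧
  (∀ a a', st a = 6 → st a' = 6 → a = a') ∧
  ((∃ a, st a = 6) → ∀ a, st a ≠ 2) ∧
  ((∃ a, st a = 0) → ∀ a, st a ≠ 2) ∧
  ((∃ a, st a = 6) ∨ (∀ a, st a ≠ 0)) ∧
  (((∀ a, st a ≠ 0 ∧ st a ≠ 1 ∧ st a ≠ 6) ∧ Fintype.card α ≤ ∑ a, stw (st a)) ∨
    ((∃ a, st a = 6) ∧ Fintype.card α ≤ ∑ a, stw (st a)) ∨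
    ((∀ a, st a ≠ 6) ∧ Fintype.card α + 1 ≤ ∑ a, stw (st a)))

lemma lower_main (k g : ℕ) (hgk : g ≤ k) (hk1 : 1 ≤ k) (hb : Nonempty β)
    (hkmin : ¬ DomWinD H ∅ ∅ (k - 1))
    (hgd : ∀ D₀ : Finset β, IsDomSet H D₀ → g ≤ D₀.card)
    (σ₀ : ℕ) (hstal : StalWinS H ∅ ∅ σ₀)
    {D S : Finset (α ⊕ α × β)} {B : ℕ}
    (h : DomWinS (coronaProd G H) D S B) :
    ∀ st : α → ℕ, LInvS H k st D S →
      Fintype.card α / 2 * g + (Fintype.card α + 1) / 2 * k ≤ (∑ a, (cproj a D).card) + B := by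
  refine DomWinS.rec (G := coronaProd G H)
    (motive_1 := fun D S B _ => ∀ st : α → ℕ, LInvD H k st D S →
      Fintype.card α / 2 * g + (Fintype.card α + 1) / 2 * k ≤ (∑ a, (cproj a D).card) + B)
    (motive_2 := fun D S B _ => ∀ st : α → ℕ, LInvS H k st D S →
      Fintype.card α / 2 * g + (Fintype.card α + 1) / 2 * k ≤ (∑ a, (cproj a D).card) + B)
    ?_ ?_ ?_ ?_ h
  · -- DomWinD.done
    intro D S B hdom st hinv
    obtain ⟨hok, hdisj, hno3, h6u, h62, h02, hPor, harith⟩ := hinv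
    have h45 := done_states (G := G) k hb hdom st hok hdisj
    have hJ : Fintype.card α ≤ ∑ a, stw (st a) := by
      rcases harith with ⟨_, h⟩ | ⟨_, h⟩ | ⟨_, h⟩ <;> omega
    have := done_tally (G := G) k g hgk hgd hdom st hok hdisj h45 hJ
    omega
  · -- DomWinD.step : Dominator moves v
    intro D S B₀ v hvD hvS hsub ih st hinv
    obtain ⟨hok, hdisj, hno3, h6u, h62, h02, hPor, harith⟩ := hinv
    have hdisj' : ∀ x ∈ insert v D, x ∉ S := by
      intro x hx
      rcases Finset.mem_insert.mp hx with rfl | hx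
      · exact hvS
      · exact hdisj x hx
    rcases v with b | ⟨b, u⟩
    · -- Dominator grabs a G-vertex: punished (or impossible)
      exfalso
      rcases hPor with ⟨a₀, h6⟩ | hno0
      · have h6ok := hok a₀
        rw [h6] at h6ok
        obtain ⟨haS, hpD, hpS⟩ := h6ok
        refine punishS hsub a₀ σ₀ haS hdisj' ?_
        rw [cproj_insert_inl, hpD, hpS]
        exact hstal
      · exact hvS (stOK_inl_mem (hok b) (hno0 b))
    · -- Dominator plays inside copy b
      by_cases h6b : st b = 6
      · -- forced local move in the limbo copy
        have h6ok := hok b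
        rw [h6b] at h6ok
        obtain ⟨haS, hpD, hpS⟩ := h6ok
        have huD : u ∉ cproj b D := fun hh => hvD (mem_cproj.mp hh)
        set c' : ℕ := if k = 1 then 4 else 1 with hc'
        set st' := Function.update st b c' with hst'
        have hcard' : (cproj b (insert (Sum.inr (b, u)) D)).card = 1 := by
          rw [cproj_insert_same, hpD]
          simp
        have hokb : stOK H k c' b (insert (Sum.inr (b, u)) D) S := by
          by_cases hk' : k = 1
          · rw [hc', if_pos hk']
            exact ⟨haS, by rw [hcard', hk']⟩
          · rw [hc', if_neg hk']
            refine ⟨haS, by omega, ?_⟩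
            rw [hcard', hpS, cproj_insert_same, hpD]
            intro hws
            refine hkmin ?_
            have hk2 : k - 1 = (k - 1 - 1) + 1 := by omega
            rw [hk2]
            exact DomWinD.step _ _ _ u (Finset.notMem_empty _) (Finset.notMem_empty _) hws
        have hJ' := sum_comp_update stw st b c'
        rw [h6b] at hJ'
        have hstw6 : stw 6 = 1 := rfl
        have hstwc : 1 ≤ stw c' := by
          by_cases hk' : k = 1
          · rw [hc', if_pos hk']; exact one_le_two
          · rw [hc', if_neg hk']; exact le_refl 1
        have hn : Fintype.card α ≤ ∑ a, stw (st a) := by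
          rcases harith with ⟨hne6, _⟩ | ⟨_, h⟩ | ⟨hne6, _⟩
          · exact absurd h6b (hne6 b).2.2
          · exact h
          · exact absurd h6b (hne6 b)
        have hAt' : (∑ a, (if st' a = 3 then 1 else 0)) = 0 := by
          refine At_zero ?_
          intro a
          by_cases hab : a = b
          · subst hab
            rw [hst', Function.update_self]
            by_cases hk' : k = 1
            · rw [hc', if_pos hk']; omega
            · rw [hc', if_neg hk']; omega
          · rw [hst', Function.update_of_ne hab]
            exact hno3 a
        have hinv' : LInvS H k st' (insert (Sum.inr (b, u)) D) S := by
          refine ⟨?_, hdisj', ?_, ?_, ?_, Or.inr ?_⟩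
          · intro a
            by_cases hab : a = b
            · subst hab
              rw [hst', Function.update_self]
              exact hokb
            · rw [hst', Function.update_of_ne hab]
              refine stOK_insertD_other (hok a) ?_ (by simp)
              intro u' hh
              injection hh with hh
              exact hab (congrArg Prod.fst hh).symm
          · intro a
            by_cases hab : a = b
            · subst hab
              rw [hst', Function.update_self]
              by_cases hk' : k = 1
              · rw [hc', if_pos hk']; omega
              · rw [hc', if_neg hk']; omega
            · rw [hst', Function.update_of_ne hab]
              intro h6a
              exact hab (h6u a b h6a h6b)
          · omega
          · intro ⟨a', h0'⟩
            intro a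
            constructor
            · by_cases hab : a = b
              · subst hab
                rw [hst', Function.update_self]
                by_cases hk' : k = 1
                · rw [hc', if_pos hk']; omega
                · rw [hc', if_neg hk']; omega
              · rw [hst', Function.update_of_ne hab]
                exact h62 ⟨b, h6b⟩ a
            · by_cases hab : a = b
              · subst hab
                rw [hst', Function.update_self]
                by_cases hk' : k = 1
                · rw [hc', if_pos hk']; omega
                · rw [hc', if_neg hk']; omega
              · rw [hst', Function.update_of_ne hab]
                exact hno3 a
          · rw [hst'] at hAt' ⊢
            rw [hAt']
            omega
        have hmain := ih st' hinv'
        have hSig := sum_cproj_insert (D := D) (b := b) (u := u) hvD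
        omega
      · -- not the limbo copy
        by_cases hex6 : ∃ a₀, st a₀ = 6
        · -- a limbo copy exists elsewhere: punished
          exfalso
          obtain ⟨a₀, h6⟩ := hex6
          have hba : b ≠ a₀ := fun hh => h6b (hh ▸ h6)
          have h6ok := hok a₀
          rw [h6] at h6ok
          obtain ⟨haS, hpD, hpS⟩ := h6ok
          refine punishS hsub a₀ σ₀ haS hdisj' ?_
          rw [cproj_insert_ne hba, hpD, hpS]
          exact hstal
        · -- no limbo copy: st b ∈ {1, 2, 4, 5}
          push_neg at hex6
          have hno0 : ∀ a, st a ≠ 0 := by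
            rcases hPor with ⟨a₀, h6⟩ | hno0
            · exact absurd h6 (hex6 a₀)
            · exact hno0
          have hbok := hok b
          have huD : u ∉ cproj b D := fun hh => hvD (mem_cproj.mp hh)
          have huS : u ∉ cproj b S := fun hh => hvS (mem_cproj.mp hh)
          have hSig := sum_cproj_insert (D := D) (b := b) (u := u) hvD
          have hcard' : (cproj b (insert (Sum.inr (b, u)) D)).card = (cproj b D).card + 1 := by
            rw [cproj_insert_same, Finset.card_insert_of_notMem huD]
          have hother : ∀ (a : α), a ≠ b →
              stOK H k (st a) a (insert (Sum.inr (b, u)) D) S := by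
            intro a hab
            refine stOK_insertD_other (hok a) ?_ (by simp)
            intro u' hh
            injection hh with hh
            exact hab (congrArg Prod.fst hh).symm
          obtain ⟨c, hc⟩ : ∃ c, st b = c := ⟨_, rfl⟩
          rw [hc] at hbok
          have hAt0 : (∑ a, (if st a = 3 then 1 else 0)) = 0 := At_zero hno3
          have hcc : c = 1 ∨ c = 2 ∨ c = 4 ∨ c = 5 := by
            have h0 := hno0 b
            have h3 := hno3 b
            have h6 := h6b
            rw [hc] at h0 h3 h6
            have h7 : ¬ 7 ≤ c := fun h7 => stOK_big h7 hbok
            omega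
          rcases hcc with rfl|rfl|rfl|rfl
          · -- kill an unarmored copy
            obtain ⟨haS, hcard, hcert⟩ := hbok
            have hJ3 : Fintype.card α + 1 ≤ ∑ a, stw (st a) := by
              rcases harith with ⟨hne, _⟩ | ⟨⟨a₀, h6⟩, _⟩ | ⟨_, hJ3⟩
              · exact absurd hc (hne b).2.1
              · exact absurd h6 (hex6 a₀)
              · exact hJ3
            have hJ' := sum_comp_update stw st b 5
            rw [hc] at hJ'
            have e1 : stw 1 = 1 := rfl
            have e5 : stw 5 = 0 := rfl
            have hno3' : ∀ a, Function.update st b 5 a ≠ 3 := by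
              intro a
              by_cases hab : a = b
              · subst hab; rw [Function.update_self]; omega
              · rw [Function.update_of_ne hab]; exact hno3 a
            have hinv' : LInvS H k (Function.update st b 5)
                (insert (Sum.inr (b, u)) D) S := by
              refine ⟨?_, hdisj', ?_, ?_, ?_, Or.inr ?_⟩
              · intro a
                by_cases hab : a = b
                · subst hab
                  rw [Function.update_self]
                  exact haS
                · rw [Function.update_of_ne hab]
                  exact hother a hab
              · intro a
                by_cases hab : a = b
                · subst hab; rw [Function.update_self]; omega
                · rw [Function.update_of_ne hab]; exact hex6 a
              · rw [At_zero hno3']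
                omega
              · rintro ⟨a', h0'⟩
                by_cases hab : a' = b
                · subst hab; rw [Function.update_self] at h0'; omega
                · rw [Function.update_of_ne hab] at h0'
                  exact absurd h0' (hno0 a')
              · rw [At_zero hno3']
                omega
            have hmain := ih _ hinv'
            omega
          · -- armored copy: attack or retire
            obtain ⟨haS, hcard, hcert⟩ := hbok
            by_cases hlast : k ≤ (cproj b D).card + 1
            · -- retire
              have hJ' := sum_comp_update stw st b 4
              rw [hc] at hJ'
              have e2 : stw 2 = 2 := rfl
              have e4 : stw 4 = 2 := rfl
              have hno3' : ∀ a, Function.update st b 4 a ≠ 3 := by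
                intro a
                by_cases hab : a = b
                · subst hab; rw [Function.update_self]; omega
                · rw [Function.update_of_ne hab]; exact hno3 a
              have hinv' : LInvS H k (Function.update st b 4)
                  (insert (Sum.inr (b, u)) D) S := by
                refine ⟨?_, hdisj', ?_, ?_, ?_, ?_⟩
                · intro a
                  by_cases hab : a = b
                  · subst hab
                    rw [Function.update_self]
                    exact ⟨haS, by omega⟩
                  · rw [Function.update_of_ne hab]
                    exact hother a hab
                · intro a
                  by_cases hab : a = b
                  · subst hab; rw [Function.update_self]; omega
                  · rw [Function.update_of_ne hab]; exact hex6 a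
                · rw [At_zero hno3']
                  omega
                · rintro ⟨a', h0'⟩
                  by_cases hab : a' = b
                  · subst hab; rw [Function.update_self] at h0'; omega
                  · rw [Function.update_of_ne hab] at h0'
                    exact absurd h0' (hno0 a')
                · rcases harith with ⟨hne, hJ1⟩ | ⟨⟨a₀, h6⟩, _⟩ | ⟨_, hJ3⟩
                  · refine Or.inl ⟨?_, by omega⟩
                    intro a
                    by_cases hab : a = b
                    · subst hab; rw [Function.update_self]; omega
                    · rw [Function.update_of_ne hab]
                      exact ⟨(hne a).1, (hne a).2.1⟩
                  · exact absurd h6 (hex6 a₀)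
                  · refine Or.inr ?_
                    rw [At_zero hno3']
                    omega
              have hmain := ih _ hinv'
              omega
            · -- attack
              have hr : k - 1 - (cproj b D).card
                  = (k - 1 - ((cproj b D).card + 1)) + 1 := by
                omega
              rw [hr] at hcert
              have hcert' := cert_attack hcert huD huS
              have hJ' := sum_comp_update stw st b 3
              rw [hc] at hJ'
              have e2 : stw 2 = 2 := rfl
              have e3 : stw 3 = 2 := rfl
              have hAt' := sum_comp_update (fun s => if s = 3 then 1 else 0) st b 3
              rw [hc] at hAt'
              have eF2 : (if (2:ℕ) = 3 then (1:ℕ) else 0) = 0 := rfl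
              have eF3 : (if (3:ℕ) = 3 then (1:ℕ) else 0) = 1 := rfl
              rw [eF2, eF3, hAt0] at hAt'
              have hinv' : LInvS H k (Function.update st b 3)
                  (insert (Sum.inr (b, u)) D) S := by
                refine ⟨?_, hdisj', ?_, ?_, ?_, ?_⟩
                · intro a
                  by_cases hab : a = b
                  · subst hab
                    rw [Function.update_self]
                    refine ⟨haS, by omega, ?_⟩
                    rw [cproj_insert_same, Finset.card_insert_of_notMem huD]
                    exact hcert'
                  · rw [Function.update_of_ne hab]
                    exact hother a hab
                · intro a
                  by_cases hab : a = b
                  · subst hab; rw [Function.update_self]; omega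
                  · rw [Function.update_of_ne hab]; exact hex6 a
                · omega
                · rintro ⟨a', h0'⟩
                  by_cases hab : a' = b
                  · subst hab; rw [Function.update_self] at h0'; omega
                  · rw [Function.update_of_ne hab] at h0'
                    exact absurd h0' (hno0 a')
                · rcases harith with ⟨hne, hJ1⟩ | ⟨⟨a₀, h6⟩, _⟩ | ⟨_, hJ3⟩
                  · refine Or.inl ⟨?_, by omega⟩
                    intro a
                    by_cases hab : a = b
                    · subst hab; rw [Function.update_self]; omega
                    · rw [Function.update_of_ne hab]
                      exact ⟨(hne a).1, (hne a).2.1⟩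
                  · exact absurd h6 (hex6 a₀)
                  · exact Or.inr (by omega)
              have hmain := ih _ hinv'
              omega
          · -- retired copy: free extra move for Dominator
            obtain ⟨haS, hk4⟩ := hbok
            have hinv' : LInvS H k st (insert (Sum.inr (b, u)) D) S := by
              refine ⟨?_, hdisj', hex6, by omega, ?_, ?_⟩
              · intro a
                by_cases hab : a = b
                · subst hab
                  rw [hc]
                  exact ⟨haS, by omega⟩
                · exact hother a hab
              · rintro ⟨a', h0'⟩
                exact absurd h0' (hno0 a')
              · rcases harith with ⟨hne, hJ1⟩ | ⟨⟨a₀, h6⟩, _⟩ | ⟨_, hJ3⟩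
                · exact Or.inl ⟨fun a => ⟨(hne a).1, (hne a).2.1⟩, hJ1⟩
                · exact absurd h6 (hex6 a₀)
                · exact Or.inr (by omega)
            have hmain := ih _ hinv'
            omega
          · -- abandoned copy: free extra move for Dominator
            have hinv' : LInvS H k st (insert (Sum.inr (b, u)) D) S := by
              refine ⟨?_, hdisj', hex6, by omega, ?_, ?_⟩
              · intro a
                by_cases hab : a = b
                · subst hab
                  rw [hc]
                  exact hbok
                · exact hother a hab
              · rintro ⟨a', h0'⟩
                exact absurd h0' (hno0 a')
              · rcases harith with ⟨hne, hJ1⟩ | ⟨⟨a₀, h6⟩, _⟩ | ⟨_, hJ3⟩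
                · exact Or.inl ⟨fun a => ⟨(hne a).1, (hne a).2.1⟩, hJ1⟩
                · exact absurd h6 (hex6 a₀)
                · exact Or.inr (by omega)
            have hmain := ih _ hinv'
            omega
  · -- DomWinS.done
    intro D S B hdom st hinv
    obtain ⟨hok, hdisj, hno6, hAt, h4', harith⟩ := hinv
    have h45 := done_states (G := G) k hb hdom st hok hdisj
    have hJ : Fintype.card α ≤ ∑ a, stw (st a) := by
      rcases harith with ⟨_, h⟩ | h <;> omega
    have := done_tally (G := G) k g hgk hgd hdom st hok hdisj h45 hJ
    omega
  · -- DomWinS.step : Staller to move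
    intro D S B hex hall ih st hinv
    obtain ⟨hok, hdisj, hno6, hAt, h4', harith⟩ := hinv
    by_cases hP : ∃ a₁, st a₁ = 0
    · -- grab a pending G-vertex
      obtain ⟨a₁, h0⟩ := hP
      have h0ok := hok a₁
      rw [h0] at h0ok
      obtain ⟨hD1, hS1, hpD, hpS⟩ := h0ok
      have hno23 := h4' ⟨a₁, h0⟩
      have hdisj2 : ∀ x ∈ D, x ∉ insert (Sum.inl a₁) S := by
        intro x hx hmem
        rcases Finset.mem_insert.mp hmem with rfl | hmem
        · exact hD1 hx
        · exact hdisj x hx hmem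
      have hJ' := sum_comp_update stw st a₁ 6
      rw [h0] at hJ'
      have e0 : stw 0 = 1 := rfl
      have e6 : stw 6 = 1 := rfl
      have hAt0 : (∑ a, (if st a = 3 then 1 else 0)) = 0 :=
        At_zero (fun a => (hno23 a).2)
      have hJn : Fintype.card α ≤ ∑ a, stw (st a) := by
        rcases harith with ⟨hne, _⟩ | h2
        · exact absurd h0 (hne a₁).1
        · omega
      have hinv' : LInvD H k (Function.update st a₁ 6) D (insert (Sum.inl a₁) S) := by
        refine ⟨?_, hdisj2, ?_, ?_, ?_, ?_,
          Or.inl ⟨a₁, Function.update_self _ _ _⟩,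
          Or.inr (Or.inl ⟨⟨a₁, Function.update_self _ _ _⟩, by omega⟩)⟩
        · intro a
          by_cases hab : a = a₁
          · subst hab
            rw [Function.update_self]
            refine ⟨Finset.mem_insert_self _ _, hpD, ?_⟩
            rw [cproj_insert_inl]
            exact hpS
          · rw [Function.update_of_ne hab]
            refine stOK_insertS_other (hok a) (by simp) ?_
            intro hh
            injection hh with hh
            exact hab hh.symm
        · intro a
          by_cases hab : a = a₁
          · subst hab; rw [Function.update_self]; omega
          · rw [Function.update_of_ne hab]; exact (hno23 a).2
        · intro a a' h6a h6a'
          by_cases hab : a = a₁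
          · by_cases hab' : a' = a₁
            · rw [hab, hab']
            · rw [Function.update_of_ne hab'] at h6a'
              exact absurd h6a' (hno6 a')
          · rw [Function.update_of_ne hab] at h6a
            exact absurd h6a (hno6 a)
        · intro _ a
          by_cases hab : a = a₁
          · subst hab; rw [Function.update_self]; omega
          · rw [Function.update_of_ne hab]; exact (hno23 a).1
        · intro _ a
          by_cases hab : a = a₁
          · subst hab; rw [Function.update_self]; omega
          · rw [Function.update_of_ne hab]; exact (hno23 a).1
      exact ih _ hD1 hS1 _ hinv'
    · by_cases hA : ∃ a₁, st a₁ = 3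
      · -- re-arm the attacked copy
        obtain ⟨a₁, h3⟩ := hA
        have h3ok := hok a₁
        rw [h3] at h3ok
        obtain ⟨haS, hcard, hcert⟩ := h3ok
        obtain ⟨hnd, hor⟩ := staller_response hcert
        rcases hor with ⟨w₁, hw1D, hw1S, hcert'⟩ | hfull
        · have hwD : Sum.inr (a₁, w₁) ∉ D := fun hh => hw1D (mem_cproj.mpr hh)
          have hwS : Sum.inr (a₁, w₁) ∉ S := fun hh => hw1S (mem_cproj.mpr hh)
          have hdisj2 : ∀ x ∈ D, x ∉ insert (Sum.inr (a₁, w₁)) S := by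
            intro x hx hmem
            rcases Finset.mem_insert.mp hmem with rfl | hmem
            · exact hwD hx
            · exact hdisj x hx hmem
          have hno3' : ∀ a, Function.update st a₁ 2 a ≠ 3 := by
            intro a
            by_cases hab : a = a₁
            · subst hab; rw [Function.update_self]; omega
            · rw [Function.update_of_ne hab]
              intro h3a
              exact hab (att_unique hAt h3a h3)
          have hAt1 : 1 ≤ ∑ a, (if st a = 3 then 1 else 0) := one_le_At h3
          have hJ' := sum_comp_update stw st a₁ 2
          rw [h3] at hJ'
          have e3 : stw 3 = 2 := rfl
          have e2 : stw 2 = 2 := rfl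
          have hinv' : LInvD H k (Function.update st a₁ 2) D
              (insert (Sum.inr (a₁, w₁)) S) := by
            refine ⟨?_, hdisj2, hno3', ?_, ?_, ?_, Or.inr ?_, ?_⟩
            · intro a
              by_cases hab : a = a₁
              · subst hab
                rw [Function.update_self]
                refine ⟨Finset.mem_insert_of_mem haS, hcard, ?_⟩
                rw [cproj_insert_same]
                exact hcert'
              · rw [Function.update_of_ne hab]
                refine stOK_insertS_other (hok a) ?_ (by simp)
                intro u' hh
                injection hh with hh
                exact hab (congrArg Prod.fst hh).symm
            · intro a a' h6a h6a'
              exfalso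
              by_cases hab : a = a₁
              · rw [hab, Function.update_self] at h6a; omega
              · rw [Function.update_of_ne hab] at h6a
                exact hno6 a h6a
            · rintro ⟨a', h6'⟩
              exfalso
              by_cases hab : a' = a₁
              · rw [hab, Function.update_self] at h6'; omega
              · rw [Function.update_of_ne hab] at h6'
                exact hno6 a' h6'
            · rintro ⟨a', h0'⟩
              exfalso
              by_cases hab : a' = a₁
              · rw [hab, Function.update_self] at h0'; omega
              · rw [Function.update_of_ne hab] at h0'
                exact hP ⟨a', h0'⟩
            · intro a
              by_cases hab : a = a₁
              · subst hab; rw [Function.update_self]; omega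
              · rw [Function.update_of_ne hab]
                exact fun h0' => hP ⟨a, h0'⟩
            · rcases harith with ⟨hne, hJ1⟩ | hJ2
              · refine Or.inl ⟨?_, by omega⟩
                intro a
                by_cases hab : a = a₁
                · subst hab; rw [Function.update_self]; omega
                · rw [Function.update_of_ne hab]
                  exact ⟨(hne a).1, (hne a).2, hno6 a⟩
              · refine Or.inr (Or.inr ⟨?_, by omega⟩)
                intro a
                by_cases hab : a = a₁
                · subst hab; rw [Function.update_self]; omega
                · rw [Function.update_of_ne hab]; exact hno6 a
          exact ih _ hwD hwS _ hinv'
        · exfalso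
          exact deadS (DomWinS.step _ _ _ hex hall) a₁ haS
            (fun hh => hdisj _ hh haS) hnd hfull
      · by_cases hU : ∃ a₁, st a₁ = 1
        · -- armor an unarmored copy
          obtain ⟨a₁, h1⟩ := hU
          have h1ok := hok a₁
          rw [h1] at h1ok
          obtain ⟨haS, hcard, hcert⟩ := h1ok
          obtain ⟨hnd, hor⟩ := staller_response hcert
          rcases hor with ⟨w₁, hw1D, hw1S, hcert'⟩ | hfull
          · have hwD : Sum.inr (a₁, w₁) ∉ D := fun hh => hw1D (mem_cproj.mpr hh)
            have hwS : Sum.inr (a₁, w₁) ∉ S := fun hh => hw1S (mem_cproj.mpr hh)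
            have hdisj2 : ∀ x ∈ D, x ∉ insert (Sum.inr (a₁, w₁)) S := by
              intro x hx hmem
              rcases Finset.mem_insert.mp hmem with rfl | hmem
              · exact hwD hx
              · exact hdisj x hx hmem
            have hno3 : ∀ a, st a ≠ 3 := fun a h => hA ⟨a, h⟩
            have hno3' : ∀ a, Function.update st a₁ 2 a ≠ 3 := by
              intro a
              by_cases hab : a = a₁
              · subst hab; rw [Function.update_self]; omega
              · rw [Function.update_of_ne hab]; exact hno3 a
            have hAt0 : (∑ a, (if st a = 3 then 1 else 0)) = 0 := At_zero hno3
            have hJ' := sum_comp_update stw st a₁ 2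
            rw [h1] at hJ'
            have e1 : stw 1 = 1 := rfl
            have e2 : stw 2 = 2 := rfl
            have hJn : Fintype.card α ≤ ∑ a, stw (st a) := by
              rcases harith with ⟨hne, _⟩ | h2
              · exact absurd h1 (hne a₁).2
              · omega
            have hinv' : LInvD H k (Function.update st a₁ 2) D
                (insert (Sum.inr (a₁, w₁)) S) := by
              refine ⟨?_, hdisj2, hno3', ?_, ?_, ?_, Or.inr ?_,
                Or.inr (Or.inr ⟨?_, by omega⟩)⟩
              · intro a
                by_cases hab : a = a₁
                · subst hab
                  rw [Function.update_self]
                  refine ⟨Finset.mem_insert_of_mem haS, hcard, ?_⟩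
                  rw [cproj_insert_same]
                  exact hcert'
                · rw [Function.update_of_ne hab]
                  refine stOK_insertS_other (hok a) ?_ (by simp)
                  intro u' hh
                  injection hh with hh
                  exact hab (congrArg Prod.fst hh).symm
              · intro a a' h6a h6a'
                exfalso
                by_cases hab : a = a₁
                · rw [hab, Function.update_self] at h6a; omega
                · rw [Function.update_of_ne hab] at h6a
                  exact hno6 a h6a
              · rintro ⟨a', h6'⟩
                exfalso
                by_cases hab : a' = a₁
                · rw [hab, Function.update_self] at h6'; omega
                · rw [Function.update_of_ne hab] at h6'
                  exact hno6 a' h6'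
              · rintro ⟨a', h0'⟩
                exfalso
                by_cases hab : a' = a₁
                · rw [hab, Function.update_self] at h0'; omega
                · rw [Function.update_of_ne hab] at h0'
                  exact hP ⟨a', h0'⟩
              · intro a
                by_cases hab : a = a₁
                · subst hab; rw [Function.update_self]; omega
                · rw [Function.update_of_ne hab]
                  exact fun h0' => hP ⟨a, h0'⟩
              · intro a
                by_cases hab : a = a₁
                · subst hab; rw [Function.update_self]; omega
                · rw [Function.update_of_ne hab]; exact hno6 a
            exact ih _ hwD hwS _ hinv'
          · exfalso
            exact deadS (DomWinS.step _ _ _ hex hall) a₁ haS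
              (fun hh => hdisj _ hh haS) hnd hfull
        · -- spare move
          have hno0 : ∀ a, st a ≠ 0 := fun a h => hP ⟨a, h⟩
          have hno3 : ∀ a, st a ≠ 3 := fun a h => hA ⟨a, h⟩
          have hno1 : ∀ a, st a ≠ 1 := fun a h => hU ⟨a, h⟩
          have hAt0 : (∑ a, (if st a = 3 then 1 else 0)) = 0 := At_zero hno3
          have hJn : Fintype.card α ≤ ∑ a, stw (st a) := by
            rcases harith with ⟨_, hJ1⟩ | h2
            · exact hJ1
            · omega
          obtain ⟨w₀, hw0D, hw0S⟩ := hex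
          rcases w₀ with b | ⟨b, u⟩
          · exact absurd (stOK_inl_mem (hok b) (hno0 b)) hw0S
          · have hbok := hok b
            obtain ⟨c, hcq⟩ : ∃ c, st b = c := ⟨_, rfl⟩
            rw [hcq] at hbok
            have hcc : c = 2 ∨ c = 4 ∨ c = 5 := by
              have h0 := hno0 b
              have h1 := hno1 b
              have h3 := hno3 b
              have h6 := hno6 b
              rw [hcq] at h0 h1 h3 h6
              have h7 : ¬ 7 ≤ c := fun h7 => stOK_big h7 hbok
              omega
            rcases hcc with rfl|rfl|rfl
            · -- armored copy: certificate-preserving extra move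
              obtain ⟨haS, hcard, hcert⟩ := hbok
              have hu1 : u ∉ cproj b D := fun hh => hw0D (mem_cproj.mp hh)
              have hu2 : u ∉ cproj b S := fun hh => hw0S (mem_cproj.mp hh)
              obtain ⟨w₁, hw1D, hw1S, hcert'⟩ := staller_free_move ⟨u, hu1, hu2⟩ hcert
              have hwD : Sum.inr (b, w₁) ∉ D := fun hh => hw1D (mem_cproj.mpr hh)
              have hwS : Sum.inr (b, w₁) ∉ S := fun hh => hw1S (mem_cproj.mpr hh)
              have hdisj2 : ∀ x ∈ D, x ∉ insert (Sum.inr (b, w₁)) S := by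
                intro x hx hmem
                rcases Finset.mem_insert.mp hmem with rfl | hmem
                · exact hwD hx
                · exact hdisj x hx hmem
              have hinv' : LInvD H k st D (insert (Sum.inr (b, w₁)) S) := by
                refine ⟨?_, hdisj2, hno3, ?_, ?_, ?_, Or.inr hno0,
                  Or.inl ⟨fun a => ⟨hno0 a, hno1 a, hno6 a⟩, hJn⟩⟩
                · intro a
                  by_cases hab : a = b
                  · subst hab
                    rw [hcq]
                    refine ⟨Finset.mem_insert_of_mem haS, hcard, ?_⟩
                    rw [cproj_insert_same]
                    exact hcert'
                  · refine stOK_insertS_other (hok a) ?_ (by simp)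
                    intro u' hh
                    injection hh with hh
                    exact hab (congrArg Prod.fst hh).symm
                · intro a a' h6a h6a'
                  exact absurd h6a (hno6 a)
                · rintro ⟨a', h6'⟩
                  exact absurd h6' (hno6 a')
                · rintro ⟨a', h0'⟩
                  exact absurd h0' (hno0 a')
              exact ih _ hwD hwS _ hinv'
            · -- retired copy
              obtain ⟨haS, hk4⟩ := hbok
              have hdisj2 : ∀ x ∈ D, x ∉ insert (Sum.inr (b, u)) S := by
                intro x hx hmem
                rcases Finset.mem_insert.mp hmem with rfl | hmem
                · exact hw0D hx
                · exact hdisj x hx hmem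
              have hinv' : LInvD H k st D (insert (Sum.inr (b, u)) S) := by
                refine ⟨?_, hdisj2, hno3, ?_, ?_, ?_, Or.inr hno0,
                  Or.inl ⟨fun a => ⟨hno0 a, hno1 a, hno6 a⟩, hJn⟩⟩
                · intro a
                  by_cases hab : a = b
                  · subst hab
                    rw [hcq]
                    exact ⟨Finset.mem_insert_of_mem haS, hk4⟩
                  · refine stOK_insertS_other (hok a) ?_ (by simp)
                    intro u' hh
                    injection hh with hh
                    exact hab (congrArg Prod.fst hh).symm
                · intro a a' h6a h6a'
                  exact absurd h6a (hno6 a)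
                · rintro ⟨a', h6'⟩
                  exact absurd h6' (hno6 a')
                · rintro ⟨a', h0'⟩
                  exact absurd h0' (hno0 a')
              exact ih _ hw0D hw0S _ hinv'
            · -- abandoned copy
              have hdisj2 : ∀ x ∈ D, x ∉ insert (Sum.inr (b, u)) S := by
                intro x hx hmem
                rcases Finset.mem_insert.mp hmem with rfl | hmem
                · exact hw0D hx
                · exact hdisj x hx hmem
              have hinv' : LInvD H k st D (insert (Sum.inr (b, u)) S) := by
                refine ⟨?_, hdisj2, hno3, ?_, ?_, ?_, Or.inr hno0,
                  Or.inl ⟨fun a => ⟨hno0 a, hno1 a, hno6 a⟩, hJn⟩⟩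
                · intro a
                  by_cases hab : a = b
                  · subst hab
                    rw [hcq]
                    exact Finset.mem_insert_of_mem hbok
                  · refine stOK_insertS_other (hok a) ?_ (by simp)
                    intro u' hh
                    injection hh with hh
                    exact hab (congrArg Prod.fst hh).symm
                · intro a a' h6a h6a'
                  exact absurd h6a (hno6 a)
                · rintro ⟨a', h6'⟩
                  exact absurd h6' (hno6 a')
                · rintro ⟨a', h0'⟩
                  exact absurd h0' (hno0 a')
              exact ih _ hw0D hw0S _ hinv'

end Lower3

/-- If `o(H) = 𝒩` and `G` is a graph with `n(G) ≥ 2`, then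
`⌊n(G)/2⌋·γ(H) + ⌈n(G)/2⌉·γ_MB(H) ≤ γ_MB'(G ⊙ H) ≤ n(G)·γ_MB(H)`. -/
theorem gammaMB'_coronaProd_boundsN {α β : Type*} [Fintype α] [DecidableEq α]
    [Fintype β] [DecidableEq β] (G : SimpleGraph α) (H : SimpleGraph β)
    (hH : OutcomeN H) (hn : 2 ≤ Fintype.card α) :
    ((Fintype.card α / 2 : ℕ) : ℕ∞) * (domNumber H : ℕ∞)
        + (((Fintype.card α + 1) / 2 : ℕ) : ℕ∞) * gammaMB H
        ≤ gammaMB' (coronaProd G H) ∧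
    gammaMB' (coronaProd G H) ≤ ((Fintype.card α : ℕ) : ℕ∞) * gammaMB H := by
  obtain ⟨⟨nD, hD⟩, ⟨σ₀, hS⟩⟩ := hH
  -- β is nonempty and the empty set does not dominate H
  have hb : Nonempty β := by
    cases hS with
    | done _ _ _ hwon =>
        obtain ⟨v, hv, _⟩ := hwon
        exact absurd hv (Finset.notMem_empty _)
    | step _ _ _ w _ _ _ => exact ⟨w⟩
  have hne : ¬ IsDomSet H (∅ : Finset β) := by
    intro hd
    obtain ⟨b₀⟩ := hb
    rcases hd b₀ with hmem | ⟨u, hu, _⟩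
    · exact absurd hmem (Finset.notMem_empty _)
    · exact absurd hu (Finset.notMem_empty _)
  -- the optimal D-game value k of H
  set K : Set ℕ := {m | DomWinD H ∅ ∅ m} with hK
  have hkset : K.Nonempty := ⟨nD, hD⟩
  set k : ℕ := sInf K with hkdef
  have hk : DomWinD H ∅ ∅ k := Nat.sInf_mem hkset
  have hk1 : 1 ≤ k := by
    by_contra hcon
    have hk0 : k = 0 := by omega
    rw [hk0] at hk
    cases hk with
    | done _ _ _ hd => exact hne hd
  have hkmin : ¬ DomWinD H ∅ ∅ (k - 1) := by
    intro hcon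
    have := Nat.sInf_le (s := K) hcon
    omega
  -- the domination number g of H
  set g : ℕ := domNumber H with hgdef
  have hgd : ∀ D₀ : Finset β, IsDomSet H D₀ → g ≤ D₀.card := by
    intro D₀ h
    exact Nat.sInf_le ⟨D₀, rfl, h⟩
  have hgk : g ≤ k := by
    obtain ⟨D₀, hdom₀, hcard₀⟩ := domWin_card.1 hk
    have := hgd D₀ hdom₀
    simp only [Finset.card_empty, Nat.zero_add] at hcard₀
    omega
  -- gammaMB H = k
  have hgmb : gammaMB H = (k : ℕ∞) := by
    apply le_antisymm
    · exact sInf_le ⟨k, rfl, hk⟩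
    · apply le_sInf
      rintro x ⟨m, rfl, hm⟩
      exact_mod_cast Nat.sInf_le (s := K) hm
  set n : ℕ := Fintype.card α with hndef
  constructor
  · -- lower bound
    apply le_sInf
    rintro x ⟨m, rfl, hm⟩
    have hmain := lower_main (G := G) k g hgk hk1 hb hkmin hgd σ₀ hS hm
      (fun _ => 0) ?_
    · have hzero : (∑ a : α, (cproj a (∅ : Finset (α ⊕ α × β))).card) = 0 := by
        apply Finset.sum_eq_zero
        intro a _
        rw [cproj_empty]
        rfl
      rw [hzero, Nat.zero_add] at hmain
      rw [hgmb]
      calc ((n / 2 : ℕ) : ℕ∞) * (g : ℕ∞) + (((n + 1) / 2 : ℕ) : ℕ∞) * (k : ℕ∞)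
          = ((n / 2 * g + (n + 1) / 2 * k : ℕ) : ℕ∞) := by push_cast; ring
        _ ≤ (m : ℕ∞) := by exact_mod_cast hmain
    · refine ⟨?_, ?_, ?_, ?_, ?_, Or.inr ?_⟩
      · intro a
        exact ⟨Finset.notMem_empty _, Finset.notMem_empty _, cproj_empty a, cproj_empty a⟩
      · intro x hx
        exact absurd hx (Finset.notMem_empty _)
      · intro a
        simp
      · have h1 : (∑ a : α, (if (fun _ => (0:ℕ)) a = 3 then 1 else 0)) = 0 := by simp
        omega
      · intro _ a
        simp
      · have h1 : (∑ a : α, (if (fun _ => (0:ℕ)) a = 3 then 1 else 0)) = 0 := by simp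
        have h2 : (∑ a : α, stw ((fun _ => (0:ℕ)) a)) = n := by
          simp [stw, hndef]
        omega
  · -- upper bound
    have hupper : DomWinS (coronaProd G H) ∅ ∅ (n * k) := by
      refine upper_main k hk hne
        ((Finset.univ \ ((∅ : Finset (α ⊕ α × β)) ∪ ∅)).card) ∅ ∅ (fun _ => k) (n * k)
        (le_refl _) ?_ ?_ ?_
      · intro x hx
        exact absurd hx (Finset.notMem_empty _)
      · intro a
        exact Or.inr (Or.inl ⟨Finset.notMem_empty _, Finset.notMem_empty _,
          cproj_empty a, cproj_empty a, rfl⟩)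
      · rw [Finset.sum_const, Finset.card_univ, smul_eq_mul]
    have hle : gammaMB' (coronaProd G H) ≤ ((n * k : ℕ) : ℕ∞) :=
      sInf_le ⟨n * k, rfl, hupper⟩
    rw [hgmb]
    calc gammaMB' (coronaProd G H) ≤ ((n * k : ℕ) : ℕ∞) := hle
      _ = (n : ℕ∞) * (k : ℕ∞) := by push_cast; ring
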